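/- arXiv:2406.18419 — 3 statements merged into one kernel-verified Lean document; each statement's English description precedes it below -/
import Mathlib

section
/- Define the rational number A(n) := 2^{n^2} · ((2n-1)!!/n!) · ∏_{i=1}^{2n-1} (2i)!/(n+i)!. Then for every integer n ≥ 1, A(n) · A(n+2) · 27(3n+1)(3n+2)^2(3n+4)^2(3n+5) = A(n+1)^2 · 256(2n+3)^2(4n+1)(4n+3)^2(4n+5); equivalently A(n)A(n+2)/A(n+1)^2 = 256(2n+3)^2(4n+1)(4n+3)^2(4n+5) / (27(3n+1)(3n+2)^2(3n+4)^2(3n+5)). -/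
/-- The product formula for the number of domino tilings of the truncated Aztec diamond
`TAD_{2n-1}` (equivalently, for the number of vertical-bone-free trimer tilings of the
`(3n,3n)`-benzel): `A(n) = 2^{n²} · ((2n-1)!!/n!) · ∏_{i=1}^{2n-1} (2i)!/(n+i)!`. -/
noncomputable def benzelA (n : ℕ) : ℚ :=
  2 ^ (n ^ 2) * ((Nat.doubleFactorial (2 * n - 1) : ℚ) / (Nat.factorial n : ℚ)) *
    ∏ i ∈ Finset.Icc 1 (2 * n - 1),
      (Nat.factorial (2 * i) : ℚ) / (Nat.factorial (n + i) : ℚ)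

open Finset Nat

lemma prod_fact_shift (c m : ℕ) :
    ∏ i ∈ Icc 1 m, ((c + i)! : ℚ) = ∏ j ∈ Icc (c+1) (c+m), (j ! : ℚ) := by
  rw [← Finset.map_add_left_Icc, Finset.prod_map]
  rfl

lemma benzel_hP (m : ℕ) :
    ∏ i ∈ Icc 1 (2*m+3), ((2*i)! : ℚ) =
      (∏ i ∈ Icc 1 (2*m+1), ((2*i)! : ℚ)) * (4*m+4)! * (4*m+6)! := by
  rw [show 2*m+3 = (2*m+2)+1 from rfl, Finset.prod_Icc_succ_top (by omega),
      show 2*m+2 = (2*m+1)+1 from rfl, Finset.prod_Icc_succ_top (by omega)]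
  ring_nf

lemma benzel_hQ (m : ℕ) :
    (∏ i ∈ Icc 1 (2*m+3), ((m+2+i)! : ℚ)) * (m+2)! =
      (∏ i ∈ Icc 1 (2*m+1), ((m+1+i)! : ℚ)) * ((3*m+3)! * (3*m+4)! * (3*m+5)!) := by
  rw [prod_fact_shift, prod_fact_shift]
  rw [show m+2+(2*m+3) = (3*m+4)+1 by ring, Finset.prod_Icc_succ_top (by omega),
      show 3*m+4 = (3*m+3)+1 from rfl, Finset.prod_Icc_succ_top (by omega),
      show 3*m+3 = (3*m+2)+1 from rfl, Finset.prod_Icc_succ_top (by omega)]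
  rw [show m+1+(2*m+1) = 3*m+2 by ring, show m+1+1 = m+2 from rfl,
      Finset.Icc_add_one_left_eq_Ioc,
      ← Finset.Ioc_insert_left (show m+2 ≤ 3*m+2 by omega),
      Finset.prod_insert (by simp)]
  rw [show 3*m+2+1 = 3*m+3 from rfl, show 3*m+3+1 = 3*m+4 from rfl,
      show 3*m+4+1 = 3*m+5 from rfl]
  ring

lemma benzel_Astep (m : ℕ) :
    benzelA (m+2) * ((3*m+3)! * (3*m+4)! * (3*m+5)! : ℚ) =
      benzelA (m+1) *
        (2^(2*m+3) * (2*(m:ℚ)+3) * ((m+1)! : ℚ) * ((4*m+4)! : ℚ) * ((4*m+6)! : ℚ)) := by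
  have e1 : 2*(m+2)-1 = 2*m+3 := by omega
  have e0 : 2*(m+1)-1 = 2*m+1 := by omega
  simp only [benzelA, e1, e0, Finset.prod_div_distrib]
  rw [benzel_hP m, show 2*m+3 = 2*m+1+2 from rfl, Nat.doubleFactorial_add_two,
      show (m+2)^2 = (m+1)^2 + (2*m+3) by ring, pow_add]
  have hq := benzel_hQ m
  have h1 : ((m+1)! : ℚ) ≠ 0 := by positivity
  have h2 : ((m+2)! : ℚ) ≠ 0 := by positivity
  have h3 : (∏ x ∈ Icc 1 (2*m+1), ((m+1+x)! : ℚ)) ≠ 0 :=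
    Finset.prod_ne_zero_iff.2 fun i _ => by positivity
  have h4 : (∏ x ∈ Icc 1 (2*m+1+2), ((m+2+x)! : ℚ)) ≠ 0 :=
    Finset.prod_ne_zero_iff.2 fun i _ => by positivity
  rw [show 2*m+1+2 = 2*m+3 from rfl]
  rw [show 2*m+1+2 = 2*m+3 from rfl] at h4
  field_simp
  push_cast
  linear_combination (-((2*(m:ℚ)+3) * ((2*m+1)‼:ℚ))) * hq

lemma benzelA_pos (n : ℕ) : 0 < benzelA n := by
  unfold benzelA
  have h1 : (0:ℚ) < 2 ^ (n^2) := by positivity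
  have h2 : (0:ℚ) < ((2*n-1)‼ : ℚ) / (n ! : ℚ) := by
    apply _root_.div_pos
    · exact_mod_cast Nat.doubleFactorial_pos _
    · exact_mod_cast Nat.factorial_pos _
  have h3 : (0:ℚ) < ∏ i ∈ Icc 1 (2*n-1), ((2*i)! : ℚ) / ((n+i)! : ℚ) :=
    Finset.prod_pos fun i _ => _root_.div_pos (by positivity) (by positivity)
  positivity

/-- Propp's conjectured recurrence for the `(3n,3n)`-benzel numbers:
`A(n)·A(n+2)·27(3n+1)(3n+2)²(3n+4)²(3n+5) = A(n+1)²·256(2n+3)²(4n+1)(4n+3)²(4n+5)`,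
equivalently `A(n)A(n+2)/A(n+1)² = 256(2n+3)²(4n+1)(4n+3)²(4n+5)/(27(3n+1)(3n+2)²(3n+4)²(3n+5))`. -/
theorem benzelA_recurrence (n : ℕ) (hn : 1 ≤ n) :
    benzelA n * benzelA (n + 2) *
        (27 * (3 * (n : ℚ) + 1) * (3 * n + 2) ^ 2 * (3 * n + 4) ^ 2 * (3 * n + 5)) =
      benzelA (n + 1) ^ 2 *
        (256 * (2 * (n : ℚ) + 3) ^ 2 * (4 * n + 1) * (4 * n + 3) ^ 2 * (4 * n + 5)) := by
  obtain ⟨m, rfl⟩ : ∃ m, n = m + 1 := ⟨n - 1, by omega⟩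
  have e1 := benzel_Astep m
  have e2 := benzel_Astep (m+1)
  rw [show 3*(m+1)+3 = 3*m+6 by ring, show 3*(m+1)+4 = 3*m+7 by ring,
      show 3*(m+1)+5 = 3*m+8 by ring, show 2*(m+1)+3 = 2*m+5 by ring,
      show (m+1)+1 = m+2 from rfl, show (m+1)+2 = m+3 from rfl,
      show 4*(m+1)+4 = 4*m+8 by ring, show 4*(m+1)+6 = 4*m+10 by ring,
      Nat.cast_add, Nat.cast_one] at e2
  rw [show (m+1) + 2 = m+3 from rfl, show (m+1) + 1 = m+2 from rfl]
  -- factorial expansions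
  have fI : ((m+2)! : ℚ) = (m+2) * (m+1)! := by
    rw [show m+2 = (m+1)+1 from rfl, Nat.factorial_succ]; push_cast; ring
  have fC : ((4*m+6)! : ℚ) = (4*m+6)*(4*m+5) * (4*m+4)! := by
    rw [show 4*m+6 = (4*m+5)+1 from rfl, Nat.factorial_succ,
        show 4*m+5 = (4*m+4)+1 from rfl, Nat.factorial_succ]; push_cast; ring
  have fA : ((4*m+8)! : ℚ) = (4*m+8)*(4*m+7)*(4*m+6)*(4*m+5) * (4*m+4)! := by
    rw [show 4*m+8 = (4*m+7)+1 from rfl, Nat.factorial_succ,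
        show 4*m+7 = (4*m+6)+1 from rfl, Nat.factorial_succ]
    push_cast
    rw [fC]; ring
  have fB : ((4*m+10)! : ℚ) = (4*m+10)*(4*m+9) * (4*m+8)! := by
    rw [show 4*m+10 = (4*m+9)+1 from rfl, Nat.factorial_succ,
        show 4*m+9 = (4*m+8)+1 from rfl, Nat.factorial_succ]; push_cast; ring
  have fH : ((3*m+4)! : ℚ) = (3*m+4) * (3*m+3)! := by
    rw [show 3*m+4 = (3*m+3)+1 from rfl, Nat.factorial_succ]; push_cast; ring
  have fG : ((3*m+5)! : ℚ) = (3*m+5) * (3*m+4)! := by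
    rw [show 3*m+5 = (3*m+4)+1 from rfl, Nat.factorial_succ]; push_cast; ring
  have fF : ((3*m+6)! : ℚ) = (3*m+6) * (3*m+5)! := by
    rw [show 3*m+6 = (3*m+5)+1 from rfl, Nat.factorial_succ]; push_cast; ring
  have fE : ((3*m+7)! : ℚ) = (3*m+7) * (3*m+6)! := by
    rw [show 3*m+7 = (3*m+6)+1 from rfl, Nat.factorial_succ]; push_cast; ring
  have fD : ((3*m+8)! : ℚ) = (3*m+8) * (3*m+7)! := by
    rw [show 3*m+8 = (3*m+7)+1 from rfl, Nat.factorial_succ]; push_cast; ring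
  have key : (2:ℚ)^(2*m+5) * (2*(m:ℚ)+5) * ((m+2)! : ℚ) * ((4*m+8)! : ℚ) * ((4*m+10)! : ℚ) *
        (27 * (3*(m:ℚ)+4) * (3*(m:ℚ)+5)^2 * (3*(m:ℚ)+7)^2 * (3*(m:ℚ)+8)) *
        ((3*m+3)! * (3*m+4)! * (3*m+5)! : ℚ) =
      (2:ℚ)^(2*m+3) * (2*(m:ℚ)+3) * ((m+1)! : ℚ) * ((4*m+4)! : ℚ) * ((4*m+6)! : ℚ) *
        (256 * (2*(m:ℚ)+5)^2 * (4*(m:ℚ)+5) * (4*(m:ℚ)+7)^2 * (4*(m:ℚ)+9)) *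
        ((3*m+6)! * (3*m+7)! * (3*m+8)! : ℚ) := by
    rw [fI, fB, fA, fC, fD, fE, fF, fG, fH]
    push_cast
    ring
  have ha : benzelA (m+1) ≠ 0 := ne_of_gt (benzelA_pos _)
  push_cast at e1 e2 ⊢
  apply mul_right_cancel₀ (b := ((((3*m+3)! : ℚ) * ((3*m+4)! : ℚ) * ((3*m+5)! : ℚ))^2 *
    (((3*m+6)! : ℚ) * ((3*m+7)! : ℚ) * ((3*m+8)! : ℚ)))) (by positivity)
  linear_combination
    (benzelA (m+1) * (27 * (3*(m:ℚ)+4) * (3*(m:ℚ)+5)^2 * (3*(m:ℚ)+7)^2 * (3*(m:ℚ)+8)) *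
      (((3*m+3)! : ℚ) * ((3*m+4)! : ℚ) * ((3*m+5)! : ℚ))^2) * e2 +
    (benzelA (m+1) * (27 * (3*(m:ℚ)+4) * (3*(m:ℚ)+5)^2 * (3*(m:ℚ)+7)^2 * (3*(m:ℚ)+8)) *
      (((3*m+3)! : ℚ) * ((3*m+4)! : ℚ) * ((3*m+5)! : ℚ)) *
      (2^(2*m+5) * (2*(m:ℚ)+5) * ((m+2)! : ℚ) * ((4*m+8)! : ℚ) * ((4*m+10)! : ℚ)) -
     (256 * (2*(m:ℚ)+5)^2 * (4*(m:ℚ)+5) * (4*(m:ℚ)+7)^2 * (4*(m:ℚ)+9)) *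
      (((3*m+6)! : ℚ) * ((3*m+7)! : ℚ) * ((3*m+8)! : ℚ)) *
      (benzelA (m+1) * (2^(2*m+3) * (2*(m:ℚ)+3) * ((m+1)! : ℚ) * ((4*m+4)! : ℚ) * ((4*m+6)! : ℚ)) +
       benzelA (m+2) * (((3*m+3)! : ℚ) * ((3*m+4)! : ℚ) * ((3*m+5)! : ℚ)))) * e1 +
    (benzelA (m+1)^2 *
      (2^(2*m+3) * (2*(m:ℚ)+3) * ((m+1)! : ℚ) * ((4*m+4)! : ℚ) * ((4*m+6)! : ℚ))) * key
end

section
/- With the notation in the context, for all strictly increasing lists of positive integers 𝐥 = (l_1,…,l_m) and 𝐪 = (q_1,…,q_n) (m, n ≥ 0, with l_m := 0 if m = 0) and every integer x ≥ 0, the following identity of rational numbers holds: P_{𝐥,𝐪}(x+1) · (2x+2l_m-m+n+2)! · (2x+2l_m-m+n+3)! · ∏_{i=1}^{m} (x+l_m-l_i+1) · ∏_{i=1}^{n} (x+l_m-q_i-m+n+2) = P_{𝐥,𝐪}(x) · (2x+2l_m+2)! · (2x+2l_m-2m+2n+3)! · ∏_{i=1}^{m} (x+l_m+l_i-m+n+2)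 · ∏_{i=1}^{n} (x+l_m+q_i+1). -/
set_option maxRecDepth 10000
set_option maxHeartbeats 2000000


open Finset

/-- The Pochhammer symbol `(a)_k = a(a+1)⋯(a+k-1)`, with `(a)_0 = 1`. -/
def pochQ (a : ℚ) (k : ℕ) : ℚ := ∏ i ∈ Finset.range k, (a + i)

/-- The product `⟨a, a+k⟩ = ∏_{i=0}^{⌊k/2⌋} (a+i)_{k+1-2i}` for `k ≥ 0`, and `1` for `k < 0`. -/
def angleQ (a : ℚ) (k : ℤ) : ℚ :=
  if k < 0 then 1
  else ∏ i ∈ Finset.range (k.toNat / 2 + 1), pochQ (a + i) (k.toNat + 1 - 2 * i)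

/-- The monic polynomial `B_{m,n}(x)`. -/
def polB (m n : ℕ) (x : ℚ) : ℚ :=
  ((2 : ℚ) ^ (m * n + m * (m - 1) / 2))⁻¹ *
    pochQ (x + n + 1) m * pochQ (x + n + 2) m *
    angleQ (x + 2) ((n : ℤ) - 2) * angleQ (x + 3 / 2) ((n : ℤ) - 1) *
    (∏ i ∈ Finset.Icc 1 n, pochQ (x + i) m / pochQ (x + i + 1 / 2) m) *
    ∏ i ∈ Finset.Icc 1 m, pochQ (2 * x + n + i + 2) (n + i - 1)

/-- The constant `c_{𝐥,𝐪}` (here `𝐥` and `𝐪` are given as functions, the lists being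
`l 1 < l 2 < ⋯ < l m` and `q 1 < q 2 < ⋯ < q n`). -/
def constC (m n : ℕ) (l q : ℕ → ℕ) : ℚ :=
  (2 : ℚ) ^ ((((n : ℤ) - m) * ((n : ℤ) - m - 1)) / 2 - m) *
    (∏ i ∈ Finset.Icc 1 m, ((Nat.factorial (2 * l i) : ℚ))⁻¹) *
    (∏ i ∈ Finset.Icc 1 n, ((Nat.factorial (2 * q i - 1) : ℚ))⁻¹) *
    (∏ i ∈ Finset.Icc 1 m, ∏ j ∈ Finset.Icc (i + 1) m, ((l j : ℚ) - (l i : ℚ))) *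
    (∏ i ∈ Finset.Icc 1 n, ∏ j ∈ Finset.Icc (i + 1) n, ((q j : ℚ) - (q i : ℚ))) /
    (∏ i ∈ Finset.Icc 1 m, ∏ j ∈ Finset.Icc 1 n, ((l i : ℚ) + (q j : ℚ)))

/-- The polynomial `P_{𝐥,𝐪}(x)`; the parameter `lm` stands for `l_m` (which is `0` if `m = 0`). -/
def polP (m n : ℕ) (l q : ℕ → ℕ) (lm : ℕ) (x : ℚ) : ℚ :=
  constC m n l q * polB m n (x + lm - m) *
    (∏ i ∈ Finset.Icc 1 m, ∏ j ∈ Finset.Icc i (l i - 1),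
      ((x + lm - j) * (x + lm - m + n + j + 2))) *
    ∏ i ∈ Finset.Icc 1 n, ∏ j ∈ Finset.Icc i (q i - 1),
      ((x + lm - m + n - j + 1) * (x + lm + j + 1))


lemma prod_congr' {s : Finset ℕ} {f g : ℕ → ℚ} (h : ∀ j ∈ s, f j = g j) :
    ∏ j ∈ s, f j = ∏ j ∈ s, g j := Finset.prod_congr rfl h

lemma pochQ_succ (a : ℚ) (k : ℕ) : pochQ a (k+1) = pochQ a k * (a + k) := by
  simp [pochQ, Finset.prod_range_succ]

lemma pochQ_succ' (a : ℚ) (k : ℕ) : pochQ a (k+1) = a * pochQ (a+1) k := by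
  rw [pochQ, Finset.prod_range_succ']
  rw [pochQ]
  have h : ∏ x ∈ range k, (a + ↑(x+1)) = ∏ i ∈ range k, (a+1+↑i) :=
    prod_congr' fun j hj => by push_cast; ring
  rw [h]
  push_cast
  ring

lemma pochQ_shift (a : ℚ) (k : ℕ) : pochQ (a+1) k * a = pochQ a k * (a + k) := by
  have h1 := pochQ_succ a k
  have h2 := pochQ_succ' a k
  rw [h1] at h2
  linarith [h2]

lemma pochQ_shift2 (a : ℚ) (k : ℕ) :
    pochQ (a+2) k * (a * (a+1)) = pochQ a k * ((a + k) * (a + k + 1)) := by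
  have h1 := pochQ_shift (a+1) k
  have h2 := pochQ_shift a k
  have h1' : pochQ (a+2) k * (a+1) = pochQ (a+1) k * (a+1+k) := by
    rw [show a+1+1 = a+2 by ring] at h1; linarith [h1]
  calc pochQ (a+2) k * (a * (a+1)) = (pochQ (a+2) k * (a+1)) * a := by ring
    _ = (pochQ (a+1) k * a) * (a+1+k) := by rw [h1']; ring
    _ = pochQ a k * ((a + k) * (a + k + 1)) := by rw [h2]; ring

lemma pochQ_pos (a : ℚ) (k : ℕ) (h : 0 < a) : 0 < pochQ a k := by
  apply Finset.prod_pos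
  intro i _
  positivity

-- telescoping
lemma TE (f : ℕ → ℚ) (a b : ℕ) (h : a ≤ b + 1) :
    (∏ j ∈ Icc a b, f (j+1)) * f a = (∏ j ∈ Icc a b, f j) * f (b+1) := by
  induction b with
  | zero =>
      interval_cases a
      · simp [Finset.Icc_self]; ring
      · simp
  | succ b IH =>
      rcases Nat.lt_or_ge a (b+2) with h' | h'
      · have hab : a ≤ b + 1 := by omega
        rw [Finset.prod_Icc_succ_top hab, Finset.prod_Icc_succ_top hab]
        have := IH hab
        linear_combination f (b+1+1) * this
      · have : a = b + 2 := by omega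
        subst this
        rw [Finset.Icc_eq_empty (by omega)]
        simp

lemma REV (f : ℕ → ℚ) (m : ℕ) :
    ∏ i ∈ Icc 1 m, f (m + 1 - i) = ∏ i ∈ Icc 1 m, f i := by
  apply Finset.prod_nbij' (fun i => m + 1 - i) (fun i => m + 1 - i) <;>
    intros <;> simp_all [Finset.mem_Icc] <;> omega

lemma prodIcc1 (g : ℕ → ℚ) (m : ℕ) :
    ∏ i ∈ Icc 1 m, g i = ∏ i ∈ range m, g (i+1) := by
  induction m with
  | zero => simp
  | succ m IH => rw [Finset.prod_Icc_succ_top (by omega), Finset.prod_range_succ, IH]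

lemma peel_bot (f : ℕ → ℚ) (a b : ℕ) (h : a ≤ b) :
    ∏ j ∈ Icc a b, f j = f a * ∏ j ∈ Icc (a+1) b, f j := by
  rw [← Finset.Ico_add_one_right_eq_Icc, ← Finset.Ico_add_one_right_eq_Icc,
    Finset.prod_eq_prod_Ico_succ_bot (by omega)]

lemma RE2 (f : ℕ → ℚ) (c d : ℕ) :
    ∏ j ∈ Icc c d, f (j+2) = ∏ j ∈ Icc (c+2) (d+2), f j := by
  apply Finset.prod_nbij' (fun j => j + 2) (fun j => j - 2) <;>
    intros <;> simp_all [Finset.mem_Icc] <;> omega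

lemma angleQ_neg (a : ℚ) (k : ℤ) (h : k < 0) : angleQ a k = 1 := by
  rw [angleQ, if_pos h]

-- step recursion
lemma AS (a : ℚ) (k : ℕ) :
    angleQ a (k : ℤ) = pochQ a (k+1) * angleQ (a+1) ((k:ℤ)-2) := by
  match k with
  | 0 =>
      rw [angleQ, if_neg (by norm_num), angleQ, if_pos (by norm_num)]
      simp [pochQ]
  | 1 =>
      rw [angleQ, if_neg (by norm_num), angleQ, if_pos (by norm_num)]
      norm_num
  | (j+2) =>
      rw [angleQ, if_neg (by push_cast; omega), angleQ, if_neg (by push_cast; omega)]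
      have h1 : ((j+2 : ℕ) : ℤ).toNat = j + 2 := by omega
      have h2 : (((j+2 : ℕ) : ℤ) - 2).toNat = j := by omega
      rw [h1, h2]
      have h3 : (j+2)/2 + 1 = (j/2 + 1) + 1 := by omega
      rw [h3, Finset.prod_range_succ']
      have h4 : ∀ i ∈ range (j/2+1),
          pochQ (a + ↑(i+1)) (j + 2 + 1 - 2 * (i+1)) = pochQ (a + 1 + ↑i) (j + 1 - 2*i) := by
        intro i hi
        have : j + 2 + 1 - 2 * (i+1) = j + 1 - 2*i := by omega
        rw [this]
        congr 1
        push_cast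
        ring
      rw [Finset.prod_congr rfl h4]
      have h5 : pochQ (a + ↑(0:ℕ)) (j + 2 + 1 - 2*0) = pochQ a (j+3) := by
        norm_num
      rw [h5]
      ring

lemma angleQ_zero (a : ℚ) : angleQ a 0 = a := by
  rw [angleQ, if_neg (by norm_num)]
  simp [pochQ]

lemma LP : ∀ (n : ℕ) (a : ℚ),
    angleQ (a+3) ((n:ℤ)-2) * angleQ (a+5/2) ((n:ℤ)-1) * ∏ j ∈ Icc 3 (n+2), (2*a+(j:ℚ))
  = angleQ (a+2) ((n:ℤ)-2) * angleQ (a+3/2) ((n:ℤ)-1)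
      * ∏ j ∈ Icc (n+4) (2*n+3), (2*a+(j:ℚ)) := by
  intro n
  induction n using Nat.strong_induction_on with
  | _ n IH =>
    match n with
    | 0 =>
        intro a
        rw [Finset.Icc_eq_empty (by omega : ¬ (3:ℕ) ≤ 0+2),
          Finset.Icc_eq_empty (by omega : ¬ (0+4:ℕ) ≤ 2*0+3),
          angleQ_neg _ _ (by norm_num), angleQ_neg _ _ (by norm_num),
          angleQ_neg _ _ (by norm_num), angleQ_neg _ _ (by norm_num)]
    | 1 =>
        intro a
        have h1 : ((1:ℕ):ℤ) - 2 = -1 := by norm_num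
        have h2 : ((1:ℕ):ℤ) - 1 = 0 := by norm_num
        rw [h1, h2, angleQ_neg (a+3) (-1) (by norm_num), angleQ_neg (a+2) (-1) (by norm_num),
          angleQ_zero (a+5/2), angleQ_zero (a+3/2)]
        norm_num [Finset.Icc_self]
        ring
    | (k+2) =>
        intro a
        have e1 : ((k+2:ℕ):ℤ) - 2 = ((k:ℕ):ℤ) := by push_cast; ring
        have e2 : ((k+2:ℕ):ℤ) - 1 = ((k+1:ℕ):ℤ) := by push_cast; ring
        rw [e1, e2, AS (a+3) k, AS (a+5/2) (k+1), AS (a+2) k, AS (a+3/2) (k+1)]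
        rw [show a+3+1 = a+4 by ring, show a+5/2+1 = a+7/2 by ring,
          show a+2+1 = a+3 by ring, show a+3/2+1 = a+5/2 by ring,
          show ((k+1:ℕ):ℤ) - 2 = (k:ℤ) - 1 by push_cast; ring]
        have IH' := IH k (by omega) (a+1)
        rw [show a+1+3 = a+4 by ring, show a+1+5/2 = a+7/2 by ring,
          show a+1+2 = a+3 by ring, show a+1+3/2 = a+5/2 by ring] at IH'
        have r1 : ∏ j ∈ Icc 3 (k+2), (2*(a+1)+(j:ℚ)) = ∏ j ∈ Icc 5 (k+4), (2*a+(j:ℚ)) := by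
          rw [show (5:ℕ) = 3+2 by norm_num, show k+4 = (k+2)+2 by ring,
            ← RE2 (fun j => 2*a+(j:ℚ)) 3 (k+2)]
          exact prod_congr' fun j hj => by push_cast; ring
        have r2 : ∏ j ∈ Icc (k+4) (2*k+3), (2*(a+1)+(j:ℚ))
            = ∏ j ∈ Icc (k+6) (2*k+5), (2*a+(j:ℚ)) := by
          rw [show k+6 = (k+4)+2 by ring, show 2*k+5 = (2*k+3)+2 by ring,
            ← RE2 (fun j => 2*a+(j:ℚ)) (k+4) (2*k+3)]
          exact prod_congr' fun j hj => by push_cast; ring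
        rw [r1, r2] at IH'
        -- expand goal products
        rw [show k+2+2 = k+4 by ring, show k+2+4 = k+6 by ring,
          show 2*(k+2)+3 = (2*k+6)+1 by ring]
        rw [peel_bot _ 3 (k+4) (by omega), peel_bot _ 4 (k+4) (by omega),
          Finset.prod_Icc_succ_top (by omega : k+6 ≤ (2*k+6)+1),
          show 2*k+6 = (2*k+5)+1 by ring,
          Finset.prod_Icc_succ_top (by omega : k+6 ≤ (2*k+5)+1)]
        have s1 : pochQ (a+3) (k+1) * (a+2) = pochQ (a+2) (k+1) * (a+(k:ℚ)+3) := by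
          have h := pochQ_shift (a+2) (k+1)
          rw [show a+2+1 = a+3 by ring] at h
          rw [h]
          push_cast
          ring
        have s2 : pochQ (a+7/2) (k+2) * (a+5/2) = pochQ (a+5/2) (k+2) * (a+(k:ℚ)+9/2) := by
          have h := pochQ_shift (a+5/2) (k+2)
          rw [show a+5/2+1 = a+7/2 by ring] at h
          rw [h]
          push_cast
          ring
        have s2' : pochQ (a+5/2) (k+2) * (a+3/2) = pochQ (a+3/2) (k+2) * (a+(k:ℚ)+7/2) := by
          have h := pochQ_shift (a+3/2) (k+2)
          rw [show a+3/2+1 = a+5/2 by ring] at h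
          rw [h]
          push_cast
          ring
        push_cast
        linear_combination
          (4*(a+3/2)*(pochQ (a+5/2) (k+2))*(angleQ (a+4) ((k:ℤ)-2)*angleQ (a+7/2) ((k:ℤ)-1)
            *∏ j ∈ Icc 5 (k+4), (2*a+(j:ℚ)))) * s1
          + (4*(pochQ (a+2) (k+1))*(a+(k:ℚ)+3)*(angleQ (a+4) ((k:ℤ)-2)*angleQ (a+7/2) ((k:ℤ)-1)
            *∏ j ∈ Icc 5 (k+4), (2*a+(j:ℚ)))) * s2'
          + (4*(pochQ (a+2) (k+1))*(pochQ (a+3/2) (k+2))*(a+(k:ℚ)+3)*(a+(k:ℚ)+7/2)) * IH'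

lemma RES0 (z n : ℕ) :
    (∏ j ∈ Icc (n+4) (2*n+3), (2*(z:ℚ)+(j:ℚ)))
      * (Nat.factorial (2*z+n+2) : ℚ) * (Nat.factorial (2*z+n+3) : ℚ)
  = (Nat.factorial (2*z+2) : ℚ) * (Nat.factorial (2*z+2*n+3) : ℚ)
      * ∏ j ∈ Icc 3 (n+2), (2*(z:ℚ)+(j:ℚ)) := by
  induction n with
  | zero =>
      rw [Finset.Icc_eq_empty (by omega : ¬ (0+4:ℕ) ≤ 2*0+3),
        Finset.Icc_eq_empty (by omega : ¬ (3:ℕ) ≤ 0+2),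
        show 2*z+0+2 = 2*z+2 by ring, show 2*z+0+3 = 2*z+2*0+3 by ring]
      simp
  | succ n IH =>
      have hμ : (2*(z:ℚ)+(n:ℚ)+4) ≠ 0 := by positivity
      refine mul_right_cancel₀ (b := 2*(z:ℚ)+(n:ℚ)+4) hμ ?_
      -- index normalizations
      rw [show n+1+4 = n+5 by ring, show 2*(n+1)+3 = 2*n+5 by ring,
        show 2*z+(n+1)+2 = 2*z+n+3 by ring, show 2*z+(n+1)+3 = (2*z+n+3)+1 by ring,
        show 2*z+2*(n+1)+3 = ((2*z+2*n+3)+1)+1 by ring, show n+1+2 = (n+2)+1 by ring]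
      have P : (∏ j ∈ Icc (n+5) (2*n+5), (2*(z:ℚ)+(j:ℚ))) * (2*(z:ℚ)+(n:ℚ)+4)
          = (∏ j ∈ Icc (n+4) (2*n+3), (2*(z:ℚ)+(j:ℚ)))
            * ((2*(z:ℚ)+2*(n:ℚ)+4)*(2*(z:ℚ)+2*(n:ℚ)+5)) := by
        have left : ∏ j ∈ Icc (n+4) (2*n+5), (2*(z:ℚ)+(j:ℚ))
            = (2*(z:ℚ)+(↑(n+4):ℚ)) * ∏ j ∈ Icc (n+5) (2*n+5), (2*(z:ℚ)+(j:ℚ)) := by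
          rw [peel_bot _ (n+4) (2*n+5) (by omega), show n+4+1 = n+5 by ring]
        have right : ∏ j ∈ Icc (n+4) (2*n+5), (2*(z:ℚ)+(j:ℚ))
            = (∏ j ∈ Icc (n+4) (2*n+3), (2*(z:ℚ)+(j:ℚ)))
              * (2*(z:ℚ)+(↑(2*n+4):ℚ)) * (2*(z:ℚ)+(↑(2*n+5):ℚ)) := by
          rw [show 2*n+5 = (2*n+4)+1 by ring,
            Finset.prod_Icc_succ_top (by omega : n+4 ≤ (2*n+4)+1),
            show 2*n+4 = (2*n+3)+1 by ring,
            Finset.prod_Icc_succ_top (by omega : n+4 ≤ (2*n+3)+1)]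
        rw [right] at left
        push_cast at left ⊢
        linarith [left]
      have hfa : (Nat.factorial ((2*z+n+3)+1) : ℚ)
          = ((2*z:ℚ)+(n:ℚ)+4) * (Nat.factorial (2*z+n+3) : ℚ) := by
        rw [Nat.factorial_succ]; push_cast; ring
      have hfb : (Nat.factorial (((2*z+2*n+3)+1)+1) : ℚ)
          = ((2*z:ℚ)+2*(n:ℚ)+5) * ((2*z:ℚ)+2*(n:ℚ)+4) * (Nat.factorial (2*z+2*n+3) : ℚ) := by
        rw [Nat.factorial_succ, Nat.factorial_succ]; push_cast; ring
      have hfc : (Nat.factorial (2*z+n+3) : ℚ)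
          = ((2*z:ℚ)+(n:ℚ)+3) * (Nat.factorial (2*z+n+2) : ℚ) := by
        rw [show 2*z+n+3 = (2*z+n+2)+1 by ring, Nat.factorial_succ]; push_cast; ring
      have hpi : ∏ j ∈ Icc 3 ((n+2)+1), (2*(z:ℚ)+(j:ℚ))
          = (∏ j ∈ Icc 3 (n+2), (2*(z:ℚ)+(j:ℚ))) * (2*(z:ℚ)+(n:ℚ)+3) := by
        rw [Finset.prod_Icc_succ_top (by omega : 3 ≤ (n+2)+1)]
        push_cast
        ring
      rw [hfa, hfb, hpi]
      linear_combination
        ((Nat.factorial (2*z+n+3) : ℚ) * (Nat.factorial (2*z+n+3) : ℚ)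
          * (2*(z:ℚ)+(n:ℚ)+4)) * P
        + ((∏ j ∈ Icc (n+4) (2*n+3), (2*(z:ℚ)+(j:ℚ)))
            * ((2*(z:ℚ)+2*(n:ℚ)+4)*(2*(z:ℚ)+2*(n:ℚ)+5)) * (2*(z:ℚ)+(n:ℚ)+4)
            * (Nat.factorial (2*z+n+3) : ℚ)) * hfc
        + ((2*(z:ℚ)+2*(n:ℚ)+4)*(2*(z:ℚ)+2*(n:ℚ)+5) * (2*(z:ℚ)+(n:ℚ)+4)
            * (2*(z:ℚ)+(n:ℚ)+3)) * IH

lemma RES (z n : ℕ) : ∀ m : ℕ,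
    ((z:ℚ)+(n:ℚ)+(m:ℚ)+1) * ((z:ℚ)+(n:ℚ)+(m:ℚ)+2)
      * (∏ j ∈ Icc (n+4) (2*n+3), (2*(z:ℚ)+(j:ℚ)))
      * (∏ i ∈ Icc 1 m, ((2*(z:ℚ)+2*(n:ℚ)+2*(i:ℚ)+1)*(2*(z:ℚ)+2*(n:ℚ)+2*(i:ℚ)+2)))
      * (Nat.factorial (2*z+m+n+2) : ℚ) * (Nat.factorial (2*z+m+n+3) : ℚ)
      * pochQ ((z:ℚ)+2) n * pochQ ((z:ℚ)+3/2) m * pochQ ((z:ℚ)+(n:ℚ)+1) m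
  = (Nat.factorial (2*z+2*m+2) : ℚ) * (Nat.factorial (2*z+2*n+3) : ℚ)
      * pochQ ((z:ℚ)+(n:ℚ)+3) m * (∏ i ∈ Icc 1 n, ((z:ℚ)+(m:ℚ)+(i:ℚ)+1))
      * pochQ ((z:ℚ)+(n:ℚ)+3/2) m * (((z:ℚ)+(n:ℚ)+1)*((z:ℚ)+(n:ℚ)+2))
      * (∏ j ∈ Icc 3 (n+2), (2*(z:ℚ)+(j:ℚ)))
      * (∏ i ∈ Icc 1 m, ((2*(z:ℚ)+(n:ℚ)+(i:ℚ)+2)*(2*(z:ℚ)+(n:ℚ)+(i:ℚ)+3))) := by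
  intro m
  induction m with
  | zero =>
      have hp0 : ∀ a : ℚ, pochQ a 0 = 1 := fun a => by simp [pochQ]
      have hY : ∏ i ∈ Icc 1 n, ((z:ℚ)+((0:ℕ):ℚ)+(i:ℚ)+1) = pochQ ((z:ℚ)+2) n := by
        rw [prodIcc1, pochQ]
        exact prod_congr' fun j hj => by push_cast; ring
      rw [hY]
      simp only [Finset.Icc_eq_empty (by omega : ¬ (1:ℕ) ≤ 0), Finset.prod_empty, hp0]
      rw [show (2*z+0+n+2) = 2*z+n+2 from by omega, show (2*z+0+n+3) = 2*z+n+3 from by omega,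
        show (2*z+2*0+2) = 2*z+2 from by omega]
      push_cast
      linear_combination (((z:ℚ)+(n:ℚ)+1)*((z:ℚ)+(n:ℚ)+2) * pochQ ((z:ℚ)+2) n) * RES0 z n
  | succ m IH =>
      have hμ : ((z:ℚ)+(n:ℚ)+(m:ℚ)+1)*((z:ℚ)+(m:ℚ)+2) ≠ 0 := by positivity
      refine mul_right_cancel₀ (b := ((z:ℚ)+(n:ℚ)+(m:ℚ)+1)*((z:ℚ)+(m:ℚ)+2)) hμ ?_
      have g1 : ∏ i ∈ Icc 1 (m+1), ((2*(z:ℚ)+2*(n:ℚ)+2*(i:ℚ)+1)*(2*(z:ℚ)+2*(n:ℚ)+2*(i:ℚ)+2))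
          = (∏ i ∈ Icc 1 m, ((2*(z:ℚ)+2*(n:ℚ)+2*(i:ℚ)+1)*(2*(z:ℚ)+2*(n:ℚ)+2*(i:ℚ)+2)))
            * ((2*(z:ℚ)+2*(n:ℚ)+2*(m:ℚ)+3)*(2*(z:ℚ)+2*(n:ℚ)+2*(m:ℚ)+4)) := by
        rw [Finset.prod_Icc_succ_top (by omega)]
        push_cast
        ring
      have g9 : ∏ i ∈ Icc 1 (m+1), ((2*(z:ℚ)+(n:ℚ)+(i:ℚ)+2)*(2*(z:ℚ)+(n:ℚ)+(i:ℚ)+3))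
          = (∏ i ∈ Icc 1 m, ((2*(z:ℚ)+(n:ℚ)+(i:ℚ)+2)*(2*(z:ℚ)+(n:ℚ)+(i:ℚ)+3)))
            * ((2*(z:ℚ)+(n:ℚ)+(m:ℚ)+3)*(2*(z:ℚ)+(n:ℚ)+(m:ℚ)+4)) := by
        rw [Finset.prod_Icc_succ_top (by omega)]
        push_cast
        ring
      have castm1 : ((m+1:ℕ):ℚ) = (m:ℚ)+1 := by push_cast; ring
      have gY : (∏ i ∈ Icc 1 n, ((z:ℚ)+((m:ℚ)+1)+(i:ℚ)+1)) * ((z:ℚ)+(m:ℚ)+2)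
          = (∏ i ∈ Icc 1 n, ((z:ℚ)+(m:ℚ)+(i:ℚ)+1)) * ((z:ℚ)+(m:ℚ)+(n:ℚ)+2) := by
        have t : (∏ i ∈ Icc 1 n, ((z:ℚ)+(m:ℚ)+((i+1:ℕ):ℚ)+1)) * ((z:ℚ)+(m:ℚ)+((1:ℕ):ℚ)+1)
            = (∏ i ∈ Icc 1 n, ((z:ℚ)+(m:ℚ)+(i:ℚ)+1)) * ((z:ℚ)+(m:ℚ)+((n+1:ℕ):ℚ)+1) :=
          TE (fun i => (z:ℚ)+(m:ℚ)+(i:ℚ)+1) 1 n (by omega)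
        have c1 : ∏ i ∈ Icc 1 n, ((z:ℚ)+(m:ℚ)+((i+1:ℕ):ℚ)+1)
            = ∏ i ∈ Icc 1 n, ((z:ℚ)+((m:ℚ)+1)+(i:ℚ)+1) :=
          prod_congr' fun j hj => by push_cast; ring
        rw [c1] at t
        push_cast at t
        linear_combination t
      have e0 : ((Nat.factorial (2*z+(m+1)+n+2) : ℕ) : ℚ)
          = ((Nat.factorial (2*z+m+n+3) : ℕ) : ℚ) := by
        rw [show 2*z+(m+1)+n+2 = 2*z+m+n+3 from by omega]
      have e1 : ((Nat.factorial (2*z+(m+1)+n+3) : ℕ) : ℚ)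
          = (2*(z:ℚ)+(m:ℚ)+(n:ℚ)+4) * ((Nat.factorial (2*z+m+n+3) : ℕ) : ℚ) := by
        rw [show 2*z+(m+1)+n+3 = (2*z+m+n+3)+1 from by omega, Nat.factorial_succ]
        push_cast; ring
      have e2 : ((Nat.factorial (2*z+2*(m+1)+2) : ℕ) : ℚ)
          = (2*(z:ℚ)+2*(m:ℚ)+4) * (2*(z:ℚ)+2*(m:ℚ)+3)
            * ((Nat.factorial (2*z+2*m+2) : ℕ) : ℚ) := by
        rw [show 2*z+2*(m+1)+2 = ((2*z+2*m+2)+1)+1 from by omega,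
          Nat.factorial_succ, Nat.factorial_succ]
        push_cast; ring
      have hfc : (Nat.factorial (2*z+m+n+3) : ℚ)
          = (2*(z:ℚ)+(m:ℚ)+(n:ℚ)+3) * (Nat.factorial (2*z+m+n+2) : ℚ) := by
        rw [show 2*z+m+n+3 = (2*z+m+n+2)+1 from by omega, Nat.factorial_succ]
        push_cast; ring
      rw [e0, e1, e2,
        pochQ_succ ((z:ℚ)+3/2) m, pochQ_succ ((z:ℚ)+(n:ℚ)+1) m,
        pochQ_succ ((z:ℚ)+(n:ℚ)+3) m, pochQ_succ ((z:ℚ)+(n:ℚ)+3/2) m,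
        g1, g9, castm1]
      set a1 := ∏ j ∈ Icc (n+4) (2*n+3), (2*(z:ℚ)+(j:ℚ)) with ha1
      set a2 := ∏ i ∈ Icc 1 m, ((2*(z:ℚ)+2*(n:ℚ)+2*(i:ℚ)+1)*(2*(z:ℚ)+2*(n:ℚ)+2*(i:ℚ)+2)) with ha2
      set a3 := ((Nat.factorial (2*z+m+n+2) : ℕ) : ℚ) with ha3
      set a4 := ((Nat.factorial (2*z+m+n+3) : ℕ) : ℚ) with ha4
      set a5 := pochQ ((z:ℚ)+2) n with ha5
      set a6 := pochQ ((z:ℚ)+3/2) m with ha6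
      set a7 := pochQ ((z:ℚ)+(n:ℚ)+1) m with ha7
      set a8 := ((Nat.factorial (2*z+2*m+2) : ℕ) : ℚ) with ha8
      set a9 := ((Nat.factorial (2*z+2*n+3) : ℕ) : ℚ) with ha9
      set a10 := pochQ ((z:ℚ)+(n:ℚ)+3) m with ha10
      set a11 := ∏ i ∈ Icc 1 n, ((z:ℚ)+(m:ℚ)+(i:ℚ)+1) with ha11
      set a12 := ∏ i ∈ Icc 1 n, ((z:ℚ)+((m:ℚ)+1)+(i:ℚ)+1) with ha12
      set a13 := pochQ ((z:ℚ)+(n:ℚ)+3/2) m with ha13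
      set a14 := ∏ j ∈ Icc 3 (n+2), (2*(z:ℚ)+(j:ℚ)) with ha14
      set a15 := ∏ i ∈ Icc 1 m, ((2*(z:ℚ)+(n:ℚ)+(i:ℚ)+2)*(2*(z:ℚ)+(n:ℚ)+(i:ℚ)+3)) with ha15
      linear_combination
        (((z:ℚ)+(n:ℚ)+(m:ℚ)+2) * ((z:ℚ)+(n:ℚ)+(m:ℚ)+3) * a1 * a2
          * ((2*(z:ℚ)+2*(n:ℚ)+2*(m:ℚ)+3)*(2*(z:ℚ)+2*(n:ℚ)+2*(m:ℚ)+4))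
          * (2*(z:ℚ)+(m:ℚ)+(n:ℚ)+4) * a4 * a5 * a6 * ((z:ℚ)+(m:ℚ)+3/2)
          * a7 * ((z:ℚ)+(n:ℚ)+(m:ℚ)+1)
          * (((z:ℚ)+(n:ℚ)+(m:ℚ)+1)*((z:ℚ)+(m:ℚ)+2))) * hfc
        + (((z:ℚ)+(n:ℚ)+(m:ℚ)+3) * ((2*(z:ℚ)+2*(n:ℚ)+2*(m:ℚ)+3)*(2*(z:ℚ)+2*(n:ℚ)+2*(m:ℚ)+4))
          * (2*(z:ℚ)+(m:ℚ)+(n:ℚ)+3) * (2*(z:ℚ)+(m:ℚ)+(n:ℚ)+4)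
          * ((z:ℚ)+(m:ℚ)+3/2)
          * ((z:ℚ)+(n:ℚ)+(m:ℚ)+1) * ((z:ℚ)+(m:ℚ)+2)) * IH
        - ((2*(z:ℚ)+2*(m:ℚ)+3)*(2*(z:ℚ)+2*(m:ℚ)+4) * a8 * a9
          * a10 * ((z:ℚ)+(n:ℚ)+(m:ℚ)+3)
          * a13 * ((z:ℚ)+(n:ℚ)+(m:ℚ)+3/2)
          * (((z:ℚ)+(n:ℚ)+1)*((z:ℚ)+(n:ℚ)+2))
          * a14 * a15
          * ((2*(z:ℚ)+(n:ℚ)+(m:ℚ)+3)*(2*(z:ℚ)+(n:ℚ)+(m:ℚ)+4))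
          * ((z:ℚ)+(n:ℚ)+(m:ℚ)+1)) * gY

lemma CORE (z m n : ℕ) :
    polB m n ((z:ℚ)+1) * (Nat.factorial (2*z+m+n+2) : ℚ) * (Nat.factorial (2*z+m+n+3) : ℚ)
      * (∏ i ∈ Icc 1 m, ((z:ℚ)+(m:ℚ)-(i:ℚ)+1)) * (∏ i ∈ Icc 1 n, ((z:ℚ)+(n:ℚ)-(i:ℚ)+2))
  = polB m n (z:ℚ) * (Nat.factorial (2*z+2*m+2) : ℚ) * (Nat.factorial (2*z+2*n+3) : ℚ)
      * (∏ i ∈ Icc 1 m, ((z:ℚ)+(n:ℚ)+(i:ℚ)+2)) * (∏ i ∈ Icc 1 n, ((z:ℚ)+(m:ℚ)+(i:ℚ)+1)) := by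
  -- conversions of the plain products into pochhammer values
  have cXl : ∏ i ∈ Icc 1 m, ((z:ℚ)+(m:ℚ)-(i:ℚ)+1) = pochQ ((z:ℚ)+1) m := by
    calc ∏ i ∈ Icc 1 m, ((z:ℚ)+(m:ℚ)-(i:ℚ)+1)
        = ∏ i ∈ Icc 1 m, ((z:ℚ)+((m+1-i:ℕ):ℚ)) := by
          refine prod_congr' fun i hi => ?_
          rw [Finset.mem_Icc] at hi
          rw [Nat.cast_sub (by omega)]
          push_cast
          ring
      _ = ∏ i ∈ Icc 1 m, ((z:ℚ)+(i:ℚ)) := REV (fun j => (z:ℚ)+(j:ℚ)) m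
      _ = pochQ ((z:ℚ)+1) m := by
          rw [prodIcc1, pochQ]
          exact prod_congr' fun i hi => by push_cast; ring
  have cXn : ∏ i ∈ Icc 1 n, ((z:ℚ)+(n:ℚ)-(i:ℚ)+2) = pochQ ((z:ℚ)+2) n := by
    calc ∏ i ∈ Icc 1 n, ((z:ℚ)+(n:ℚ)-(i:ℚ)+2)
        = ∏ i ∈ Icc 1 n, ((z:ℚ)+((n+1-i:ℕ):ℚ)+1) := by
          refine prod_congr' fun i hi => ?_
          rw [Finset.mem_Icc] at hi
          rw [Nat.cast_sub (by omega)]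
          push_cast
          ring
      _ = ∏ i ∈ Icc 1 n, ((z:ℚ)+(i:ℚ)+1) := REV (fun j => (z:ℚ)+(j:ℚ)+1) n
      _ = pochQ ((z:ℚ)+2) n := by
          rw [prodIcc1, pochQ]
          exact prod_congr' fun i hi => by push_cast; ring
  have cYl : ∏ i ∈ Icc 1 m, ((z:ℚ)+(n:ℚ)+(i:ℚ)+2) = pochQ ((z:ℚ)+(n:ℚ)+3) m := by
    rw [prodIcc1, pochQ]
    exact prod_congr' fun i hi => by push_cast; ring
  -- blocks
  have b2 : pochQ ((z:ℚ)+(n:ℚ)+3) m * (((z:ℚ)+(n:ℚ)+1)*((z:ℚ)+(n:ℚ)+2))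
      = pochQ ((z:ℚ)+(n:ℚ)+1) m * (((z:ℚ)+(n:ℚ)+(m:ℚ)+1)*((z:ℚ)+(n:ℚ)+(m:ℚ)+2)) := by
    have h := pochQ_shift2 ((z:ℚ)+(n:ℚ)+1) m
    rw [show (z:ℚ)+(n:ℚ)+1+2 = (z:ℚ)+(n:ℚ)+3 from by ring] at h
    linear_combination h
  have b3 := LP n (z:ℚ)
  have b4 : (∏ i ∈ Icc 1 n, pochQ ((z:ℚ)+(i:ℚ)+1) m) * pochQ ((z:ℚ)+1) m
      = (∏ i ∈ Icc 1 n, pochQ ((z:ℚ)+(i:ℚ)) m) * pochQ ((z:ℚ)+(n:ℚ)+1) m := by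
    have t := TE (fun i => pochQ ((z:ℚ)+(i:ℚ)) m) 1 n (by omega)
    have hA : ∏ i ∈ Icc 1 n, pochQ ((z:ℚ)+((i+1:ℕ):ℚ)) m
        = ∏ i ∈ Icc 1 n, pochQ ((z:ℚ)+(i:ℚ)+1) m :=
      prod_congr' fun i _ => by congr 1; push_cast; ring
    have hB : pochQ ((z:ℚ)+((1:ℕ):ℚ)) m = pochQ ((z:ℚ)+1) m := by norm_num
    have hC : pochQ ((z:ℚ)+((n+1:ℕ):ℚ)) m = pochQ ((z:ℚ)+(n:ℚ)+1) m := by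
      congr 1; push_cast; ring
    rw [hA, hB, hC] at t
    exact t
  have b5 : (∏ i ∈ Icc 1 n, pochQ ((z:ℚ)+(i:ℚ)+3/2) m) * pochQ ((z:ℚ)+3/2) m
      = (∏ i ∈ Icc 1 n, pochQ ((z:ℚ)+(i:ℚ)+1/2) m) * pochQ ((z:ℚ)+(n:ℚ)+3/2) m := by
    have t := TE (fun i => pochQ ((z:ℚ)+(i:ℚ)+1/2) m) 1 n (by omega)
    have hA : ∏ i ∈ Icc 1 n, pochQ ((z:ℚ)+((i+1:ℕ):ℚ)+1/2) m
        = ∏ i ∈ Icc 1 n, pochQ ((z:ℚ)+(i:ℚ)+3/2) m :=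
      prod_congr' fun i _ => by congr 1; push_cast; ring
    have hB : pochQ ((z:ℚ)+((1:ℕ):ℚ)+1/2) m = pochQ ((z:ℚ)+3/2) m := by
      congr 1; push_cast; ring
    have hC : pochQ ((z:ℚ)+((n+1:ℕ):ℚ)+1/2) m = pochQ ((z:ℚ)+(n:ℚ)+3/2) m := by
      congr 1; push_cast; ring
    rw [hA, hB, hC] at t
    exact t
  have b6 : (∏ i ∈ Icc 1 m, pochQ (2*(z:ℚ)+(n:ℚ)+(i:ℚ)+4) (n+i-1))
        * (∏ i ∈ Icc 1 m, ((2*(z:ℚ)+(n:ℚ)+(i:ℚ)+2)*(2*(z:ℚ)+(n:ℚ)+(i:ℚ)+3)))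
      = (∏ i ∈ Icc 1 m, pochQ (2*(z:ℚ)+(n:ℚ)+(i:ℚ)+2) (n+i-1))
        * (∏ i ∈ Icc 1 m, ((2*(z:ℚ)+2*(n:ℚ)+2*(i:ℚ)+1)*(2*(z:ℚ)+2*(n:ℚ)+2*(i:ℚ)+2))) := by
    rw [← Finset.prod_mul_distrib, ← Finset.prod_mul_distrib]
    refine prod_congr' fun i hi => ?_
    rw [Finset.mem_Icc] at hi
    have h := pochQ_shift2 (2*(z:ℚ)+(n:ℚ)+(i:ℚ)+2) (n+i-1)
    have hni : ((n+i-1:ℕ):ℚ) = (n:ℚ)+(i:ℚ)-1 := by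
      rw [Nat.cast_sub (by omega)]
      push_cast
      ring
    rw [show 2*(z:ℚ)+(n:ℚ)+(i:ℚ)+2+2 = 2*(z:ℚ)+(n:ℚ)+(i:ℚ)+4 from by ring, hni] at h
    linear_combination h
  have RESi := RES z n m
  -- positivity facts
  have hDLpos : (0:ℚ) < ∏ i ∈ Icc 1 n, pochQ ((z:ℚ)+(i:ℚ)+3/2) m :=
    Finset.prod_pos fun i _ => pochQ_pos _ _ (by positivity)
  have hDRpos : (0:ℚ) < ∏ i ∈ Icc 1 n, pochQ ((z:ℚ)+(i:ℚ)+1/2) m :=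
    Finset.prod_pos fun i _ => pochQ_pos _ _ (by positivity)
  have hEpos : (0:ℚ) < (2:ℚ) ^ (m * n + m * (m - 1) / 2) := by positivity
  have hP3pos : (0:ℚ) < ∏ j ∈ Icc 3 (n+2), (2*(z:ℚ)+(j:ℚ)) := by
    refine Finset.prod_pos fun j hj => ?_
    rw [Finset.mem_Icc] at hj
    have : (3:ℚ) ≤ (j:ℚ) := by exact_mod_cast hj.1
    positivity
  have hP4pos : (0:ℚ) < ∏ i ∈ Icc 1 m, ((2*(z:ℚ)+(n:ℚ)+(i:ℚ)+2)*(2*(z:ℚ)+(n:ℚ)+(i:ℚ)+3)) :=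
    Finset.prod_pos fun i _ => by positivity
  have hp1pos : (0:ℚ) < pochQ ((z:ℚ)+1) m := pochQ_pos _ _ (by positivity)
  have hp32pos : (0:ℚ) < pochQ ((z:ℚ)+3/2) m := pochQ_pos _ _ (by positivity)
  have htaupos : (0:ℚ) < ((z:ℚ)+(n:ℚ)+1)*((z:ℚ)+(n:ℚ)+2) := by positivity
  -- unfold polB and canonicalize
  simp only [polB]
  simp only [Finset.prod_div_distrib]
  rw [show (z:ℚ)+1+(n:ℚ)+1 = (z:ℚ)+(n:ℚ)+2 from by ring,
    show (z:ℚ)+1+(n:ℚ)+2 = (z:ℚ)+(n:ℚ)+3 from by ring,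
    show (z:ℚ)+1+2 = (z:ℚ)+3 from by ring,
    show (z:ℚ)+1+3/2 = (z:ℚ)+5/2 from by ring]
  rw [show (∏ i ∈ Icc 1 n, pochQ ((z:ℚ)+1+(i:ℚ)) m)
      = ∏ i ∈ Icc 1 n, pochQ ((z:ℚ)+(i:ℚ)+1) m from
    prod_congr' fun i _ => by rw [show (z:ℚ)+1+(i:ℚ) = (z:ℚ)+(i:ℚ)+1 from by ring]]
  rw [show (∏ i ∈ Icc 1 n, pochQ ((z:ℚ)+1+(i:ℚ)+1/2) m)
      = ∏ i ∈ Icc 1 n, pochQ ((z:ℚ)+(i:ℚ)+3/2) m from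
    prod_congr' fun i _ => by rw [show (z:ℚ)+1+(i:ℚ)+1/2 = (z:ℚ)+(i:ℚ)+3/2 from by ring]]
  rw [show (∏ i ∈ Icc 1 m, pochQ (2*((z:ℚ)+1)+(n:ℚ)+(i:ℚ)+2) (n+i-1))
      = ∏ i ∈ Icc 1 m, pochQ (2*(z:ℚ)+(n:ℚ)+(i:ℚ)+4) (n+i-1) from
    prod_congr' fun i _ => by
      rw [show 2*((z:ℚ)+1)+(n:ℚ)+(i:ℚ)+2 = 2*(z:ℚ)+(n:ℚ)+(i:ℚ)+4 from by ring]]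
  rw [cXl, cXn, cYl]
  -- name all atoms
  set E := (2:ℚ) ^ (m * n + m * (m - 1) / 2) with hE
  set P1 := pochQ ((z:ℚ)+(n:ℚ)+1) m with hP1
  set P2 := pochQ ((z:ℚ)+(n:ℚ)+2) m with hP2
  set P3 := pochQ ((z:ℚ)+(n:ℚ)+3) m with hP3
  set A1L := angleQ ((z:ℚ)+3) ((n:ℤ)-2) with hA1L
  set A2L := angleQ ((z:ℚ)+5/2) ((n:ℤ)-1) with hA2L
  set A1R := angleQ ((z:ℚ)+2) ((n:ℤ)-2) with hA1R
  set A2R := angleQ ((z:ℚ)+3/2) ((n:ℤ)-1) with hA2R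
  set T5L := ∏ i ∈ Icc 1 n, pochQ ((z:ℚ)+(i:ℚ)+1) m with hT5L
  set T5R := ∏ i ∈ Icc 1 n, pochQ ((z:ℚ)+(i:ℚ)) m with hT5R
  set DL := ∏ i ∈ Icc 1 n, pochQ ((z:ℚ)+(i:ℚ)+3/2) m with hDL2
  set DR := ∏ i ∈ Icc 1 n, pochQ ((z:ℚ)+(i:ℚ)+1/2) m with hDR2
  set T7L := ∏ i ∈ Icc 1 m, pochQ (2*(z:ℚ)+(n:ℚ)+(i:ℚ)+4) (n+i-1) with hT7L
  set T7R := ∏ i ∈ Icc 1 m, pochQ (2*(z:ℚ)+(n:ℚ)+(i:ℚ)+2) (n+i-1) with hT7R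
  set F1 := ((Nat.factorial (2*z+m+n+2) : ℕ) : ℚ) with hF1
  set F2 := ((Nat.factorial (2*z+m+n+3) : ℕ) : ℚ) with hF2
  set G1 := ((Nat.factorial (2*z+2*m+2) : ℕ) : ℚ) with hG1
  set G2 := ((Nat.factorial (2*z+2*n+3) : ℕ) : ℚ) with hG2
  set p1 := pochQ ((z:ℚ)+1) m with hp1
  set p2 := pochQ ((z:ℚ)+2) n with hp2
  set p32 := pochQ ((z:ℚ)+3/2) m with hp32
  set pn32 := pochQ ((z:ℚ)+(n:ℚ)+3/2) m with hpn32
  set Yn := ∏ i ∈ Icc 1 n, ((z:ℚ)+(m:ℚ)+(i:ℚ)+1) with hYn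
  set Pi1 := ∏ j ∈ Icc (n+4) (2*n+3), (2*(z:ℚ)+(j:ℚ)) with hPi1
  set Pi2 := ∏ i ∈ Icc 1 m, ((2*(z:ℚ)+2*(n:ℚ)+2*(i:ℚ)+1)*(2*(z:ℚ)+2*(n:ℚ)+2*(i:ℚ)+2)) with hPi2
  set Pi3 := ∏ j ∈ Icc 3 (n+2), (2*(z:ℚ)+(j:ℚ)) with hPi3
  set Pi4 := ∏ i ∈ Icc 1 m, ((2*(z:ℚ)+(n:ℚ)+(i:ℚ)+2)*(2*(z:ℚ)+(n:ℚ)+(i:ℚ)+3)) with hPi4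
  have key : P2*P3*A1L*A2L*T5L*T7L*F1*F2*p1*p2*DR
      = P1*P2*A1R*A2R*T5R*T7R*G1*G2*P3*Yn*DL := by
    have hM : (((z:ℚ)+(n:ℚ)+1)*((z:ℚ)+(n:ℚ)+2)) * Pi3 * p1 * p32 * Pi4 ≠ 0 :=
      ne_of_gt (mul_pos (mul_pos (mul_pos (mul_pos htaupos hP3pos) hp1pos) hp32pos) hP4pos)
    refine mul_right_cancel₀ hM ?_
    linear_combination
      (P2*A1L*A2L*T5L*T7L*F1*F2*p1*p1*p2*DR*Pi3*p32*Pi4) * b2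
      + (P2*P1*(((z:ℚ)+(n:ℚ)+(m:ℚ)+1)*((z:ℚ)+(n:ℚ)+(m:ℚ)+2))*T5L*T7L*F1*F2*p1*p1*p2*DR*p32*Pi4) * b3
      + (P2*P1*(((z:ℚ)+(n:ℚ)+(m:ℚ)+1)*((z:ℚ)+(n:ℚ)+(m:ℚ)+2))*A1R*A2R*Pi1*T7L*F1*F2*p1*p2*DR*p32*Pi4) * b4
      + (P2*P1*(((z:ℚ)+(n:ℚ)+(m:ℚ)+1)*((z:ℚ)+(n:ℚ)+(m:ℚ)+2))*A1R*A2R*Pi1*T5R*P1*F1*F2*p1*p2*DR*p32) * b6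
      + (P2*A1R*A2R*T5R*T7R*P1*p1*DR) * RESi
      - (P2*A1R*A2R*T5R*T7R*P1*p1*G1*G2*P3*Yn*(((z:ℚ)+(n:ℚ)+1)*((z:ℚ)+(n:ℚ)+2))*Pi3*Pi4) * b5
  have hDLne : DL ≠ 0 := ne_of_gt hDLpos
  have hDRne : DR ≠ 0 := ne_of_gt hDRpos
  have hEne : E ≠ 0 := ne_of_gt hEpos
  refine mul_right_cancel₀ (b := DL * DR * E) (by positivity) ?_
  calc (E⁻¹ * P2 * P3 * A1L * A2L * (T5L/DL) * T7L * F1 * F2 * p1 * p2) * (DL*DR*E)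
      = (E⁻¹*E) * (DL⁻¹*DL) * (P2*P3*A1L*A2L*T5L*T7L*F1*F2*p1*p2*DR) := by
        rw [div_eq_mul_inv]
        ring
    _ = P2*P3*A1L*A2L*T5L*T7L*F1*F2*p1*p2*DR := by
        rw [inv_mul_cancel₀ hEne, inv_mul_cancel₀ hDLne]
        ring
    _ = P1*P2*A1R*A2R*T5R*T7R*G1*G2*P3*Yn*DL := key
    _ = (E⁻¹*E) * (DR⁻¹*DR) * (P1*P2*A1R*A2R*T5R*T7R*G1*G2*P3*Yn*DL) := by
        rw [inv_mul_cancel₀ hEne, inv_mul_cancel₀ hDRne]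
        ring
    _ = (E⁻¹ * P1 * P2 * A1R * A2R * (T5R/DR) * T7R * G1 * G2 * P3 * Yn) * (DL*DR*E) := by
        rw [div_eq_mul_inv]
        ring

lemma TL (y : ℚ) (m n : ℕ) (l : ℕ → ℕ) (h : ∀ i, 1 ≤ i → i ≤ m → i ≤ l i) :
    (∏ i ∈ Icc 1 m, ∏ j ∈ Icc i (l i - 1), ((y+(m:ℚ)-(j:ℚ)+1) * (y+(n:ℚ)+(j:ℚ)+3)))
      * (∏ i ∈ Icc 1 m, (y+(m:ℚ)-((l i:ℕ):ℚ)+1)) * (∏ i ∈ Icc 1 m, (y+(n:ℚ)+(i:ℚ)+2))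
  = (∏ i ∈ Icc 1 m, ∏ j ∈ Icc i (l i - 1), ((y+(m:ℚ)-(j:ℚ)) * (y+(n:ℚ)+(j:ℚ)+2)))
      * (∏ i ∈ Icc 1 m, (y+(m:ℚ)-(i:ℚ)+1)) * (∏ i ∈ Icc 1 m, (y+(n:ℚ)+((l i:ℕ):ℚ)+2)) := by
  rw [← Finset.prod_mul_distrib, ← Finset.prod_mul_distrib,
    ← Finset.prod_mul_distrib, ← Finset.prod_mul_distrib]
  refine prod_congr' fun i hi => ?_
  rw [Finset.mem_Icc] at hi
  have hL : 1 ≤ l i ∧ i ≤ l i := by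
    have := h i hi.1 hi.2
    omega
  rw [Finset.prod_mul_distrib, Finset.prod_mul_distrib]
  have t1 := TE (fun j => y+(m:ℚ)-(j:ℚ)+1) i (l i - 1) (by omega)
  rw [show (l i - 1) + 1 = l i from by omega] at t1
  rw [show (∏ j ∈ Icc i (l i - 1), (y+(m:ℚ)-((j+1:ℕ):ℚ)+1))
      = ∏ j ∈ Icc i (l i - 1), (y+(m:ℚ)-(j:ℚ)) from
    prod_congr' fun j _ => by push_cast; ring] at t1
  have t2 := TE (fun j => y+(n:ℚ)+(j:ℚ)+2) i (l i - 1) (by omega)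
  rw [show (l i - 1) + 1 = l i from by omega] at t2
  rw [show (∏ j ∈ Icc i (l i - 1), (y+(n:ℚ)+((j+1:ℕ):ℚ)+2))
      = ∏ j ∈ Icc i (l i - 1), (y+(n:ℚ)+(j:ℚ)+3) from
    prod_congr' fun j _ => by push_cast; ring] at t2
  linear_combination
    (-((∏ j ∈ Icc i (l i - 1), (y+(n:ℚ)+(j:ℚ)+3)) * (y+(n:ℚ)+(i:ℚ)+2))) * t1
    + ((∏ j ∈ Icc i (l i - 1), (y+(m:ℚ)-(j:ℚ))) * (y+(m:ℚ)-(i:ℚ)+1)) * t2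

lemma TQ (y : ℚ) (m n : ℕ) (q : ℕ → ℕ) (h : ∀ i, 1 ≤ i → i ≤ n → i ≤ q i) :
    (∏ i ∈ Icc 1 n, ∏ j ∈ Icc i (q i - 1), ((y+(n:ℚ)-(j:ℚ)+2) * (y+(m:ℚ)+(j:ℚ)+2)))
      * (∏ i ∈ Icc 1 n, (y+(n:ℚ)-((q i:ℕ):ℚ)+2)) * (∏ i ∈ Icc 1 n, (y+(m:ℚ)+(i:ℚ)+1))
  = (∏ i ∈ Icc 1 n, ∏ j ∈ Icc i (q i - 1), ((y+(n:ℚ)-(j:ℚ)+1) * (y+(m:ℚ)+(j:ℚ)+1)))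
      * (∏ i ∈ Icc 1 n, (y+(n:ℚ)-(i:ℚ)+2)) * (∏ i ∈ Icc 1 n, (y+(m:ℚ)+((q i:ℕ):ℚ)+1)) := by
  rw [← Finset.prod_mul_distrib, ← Finset.prod_mul_distrib,
    ← Finset.prod_mul_distrib, ← Finset.prod_mul_distrib]
  refine prod_congr' fun i hi => ?_
  rw [Finset.mem_Icc] at hi
  have hQ : 1 ≤ q i ∧ i ≤ q i := by
    have := h i hi.1 hi.2
    omega
  rw [Finset.prod_mul_distrib, Finset.prod_mul_distrib]
  have t1 := TE (fun j => y+(n:ℚ)-(j:ℚ)+2) i (q i - 1) (by omega)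
  rw [show (q i - 1) + 1 = q i from by omega] at t1
  rw [show (∏ j ∈ Icc i (q i - 1), (y+(n:ℚ)-((j+1:ℕ):ℚ)+2))
      = ∏ j ∈ Icc i (q i - 1), (y+(n:ℚ)-(j:ℚ)+1) from
    prod_congr' fun j _ => by push_cast; ring] at t1
  have t2 := TE (fun j => y+(m:ℚ)+(j:ℚ)+1) i (q i - 1) (by omega)
  rw [show (q i - 1) + 1 = q i from by omega] at t2
  rw [show (∏ j ∈ Icc i (q i - 1), (y+(m:ℚ)+((j+1:ℕ):ℚ)+1))
      = ∏ j ∈ Icc i (q i - 1), (y+(m:ℚ)+(j:ℚ)+2) from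
    prod_congr' fun j _ => by push_cast; ring] at t2
  linear_combination
    (-((∏ j ∈ Icc i (q i - 1), (y+(m:ℚ)+(j:ℚ)+2)) * (y+(m:ℚ)+(i:ℚ)+1))) * t1
    + ((∏ j ∈ Icc i (q i - 1), (y+(n:ℚ)-(j:ℚ)+1)) * (y+(n:ℚ)-(i:ℚ)+2)) * t2

/-- Lemma 4.6(first part) of the paper, cross-multiplied: the ratio
`P_{𝐥,𝐪}(x+1)/P_{𝐥,𝐪}(x)` equals the explicit product of equation (4.13). -/
theorem polP_ratio (m n : ℕ) (l q : ℕ → ℕ)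
    (hl : ∀ i j, 1 ≤ i → i < j → j ≤ m → l i < l j)
    (hq : ∀ i j, 1 ≤ i → i < j → j ≤ n → q i < q j)
    (hlpos : ∀ i, 1 ≤ i → i ≤ m → 1 ≤ l i)
    (hqpos : ∀ i, 1 ≤ i → i ≤ n → 1 ≤ q i)
    (hl0 : m = 0 → l m = 0)
    (x : ℕ) :
    polP m n l q (l m) ((x : ℚ) + 1) *
        (Nat.factorial (2 * x + 2 * l m + n + 2 - m) : ℚ) *
        (Nat.factorial (2 * x + 2 * l m + n + 3 - m) : ℚ) *
        (∏ i ∈ Finset.Icc 1 m, ((x : ℚ) + l m - l i + 1)) *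
        (∏ i ∈ Finset.Icc 1 n, ((x : ℚ) + l m - q i - m + n + 2)) =
      polP m n l q (l m) (x : ℚ) *
        (Nat.factorial (2 * x + 2 * l m + 2) : ℚ) *
        (Nat.factorial (2 * x + 2 * l m + 2 * n + 3 - 2 * m) : ℚ) *
        (∏ i ∈ Finset.Icc 1 m, ((x : ℚ) + l m + l i - m + n + 2)) *
        (∏ i ∈ Finset.Icc 1 n, ((x : ℚ) + l m + q i + 1)) := by
  have hli : ∀ i, 1 ≤ i → i ≤ m → i ≤ l i := by
    intro i
    induction i with
    | zero => intro h1 _; omega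
    | succ i IH =>
        intro _ h2
        rcases Nat.eq_zero_or_pos i with rfl | hpos
        · exact hlpos 1 le_rfl (by omega)
        · have h3 := IH (by omega) (by omega)
          have h4 := hl i (i+1) (by omega) (by omega) (by omega)
          omega
  have hqi : ∀ i, 1 ≤ i → i ≤ n → i ≤ q i := by
    intro i
    induction i with
    | zero => intro h1 _; omega
    | succ i IH =>
        intro _ h2
        rcases Nat.eq_zero_or_pos i with rfl | hpos
        · exact hqpos 1 le_rfl (by omega)
        · have h3 := IH (by omega) (by omega)
          have h4 := hq i (i+1) (by omega) (by omega) (by omega)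
          omega
  have hlm : m ≤ l m := by
    rcases Nat.eq_zero_or_pos m with rfl | hpos
    · omega
    · exact hli m hpos le_rfl
  set z0 := x + l m - m with hz0
  have hy : ((z0:ℕ):ℚ) = (x:ℚ) + ((l m : ℕ):ℚ) - (m:ℚ) := by
    rw [hz0, Nat.cast_sub (by omega)]
    push_cast
    ring
  simp only [polP]
  -- factorial indices
  rw [show 2*x+2*l m+n+2-m = 2*z0+m+n+2 from by omega,
    show 2*x+2*l m+n+3-m = 2*z0+m+n+3 from by omega,
    show 2*x+2*l m+2 = 2*z0+2*m+2 from by omega,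
    show 2*x+2*l m+2*n+3-2*m = 2*z0+2*n+3 from by omega]
  -- inner double products, x+1 side
  rw [show (∏ i ∈ Icc 1 m, ∏ j ∈ Icc i (l i - 1),
        (((x:ℚ)+1+((l m:ℕ):ℚ)-(j:ℚ)) * ((x:ℚ)+1+((l m:ℕ):ℚ)-(m:ℚ)+(n:ℚ)+(j:ℚ)+2)))
      = ∏ i ∈ Icc 1 m, ∏ j ∈ Icc i (l i - 1),
        ((((z0:ℕ):ℚ)+(m:ℚ)-(j:ℚ)+1) * (((z0:ℕ):ℚ)+(n:ℚ)+(j:ℚ)+3)) from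
    prod_congr' fun i _ => prod_congr' fun j _ => by rw [hy]; ring]
  rw [show (∏ i ∈ Icc 1 n, ∏ j ∈ Icc i (q i - 1),
        (((x:ℚ)+1+((l m:ℕ):ℚ)-(m:ℚ)+(n:ℚ)-(j:ℚ)+1) * ((x:ℚ)+1+((l m:ℕ):ℚ)+(j:ℚ)+1)))
      = ∏ i ∈ Icc 1 n, ∏ j ∈ Icc i (q i - 1),
        ((((z0:ℕ):ℚ)+(n:ℚ)-(j:ℚ)+2) * (((z0:ℕ):ℚ)+(m:ℚ)+(j:ℚ)+2)) from
    prod_congr' fun i _ => prod_congr' fun j _ => by rw [hy]; ring]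
  -- inner double products, x side
  rw [show (∏ i ∈ Icc 1 m, ∏ j ∈ Icc i (l i - 1),
        (((x:ℚ)+((l m:ℕ):ℚ)-(j:ℚ)) * ((x:ℚ)+((l m:ℕ):ℚ)-(m:ℚ)+(n:ℚ)+(j:ℚ)+2)))
      = ∏ i ∈ Icc 1 m, ∏ j ∈ Icc i (l i - 1),
        ((((z0:ℕ):ℚ)+(m:ℚ)-(j:ℚ)) * (((z0:ℕ):ℚ)+(n:ℚ)+(j:ℚ)+2)) from
    prod_congr' fun i _ => prod_congr' fun j _ => by rw [hy]; ring]
  rw [show (∏ i ∈ Icc 1 n, ∏ j ∈ Icc i (q i - 1),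
        (((x:ℚ)+((l m:ℕ):ℚ)-(m:ℚ)+(n:ℚ)-(j:ℚ)+1) * ((x:ℚ)+((l m:ℕ):ℚ)+(j:ℚ)+1)))
      = ∏ i ∈ Icc 1 n, ∏ j ∈ Icc i (q i - 1),
        ((((z0:ℕ):ℚ)+(n:ℚ)-(j:ℚ)+1) * (((z0:ℕ):ℚ)+(m:ℚ)+(j:ℚ)+1)) from
    prod_congr' fun i _ => prod_congr' fun j _ => by rw [hy]; ring]
  -- edge products
  rw [show (∏ i ∈ Icc 1 m, ((x:ℚ)+((l m:ℕ):ℚ)-((l i:ℕ):ℚ)+1))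
      = ∏ i ∈ Icc 1 m, (((z0:ℕ):ℚ)+(m:ℚ)-((l i:ℕ):ℚ)+1) from
    prod_congr' fun i _ => by rw [hy]; ring]
  rw [show (∏ i ∈ Icc 1 n, ((x:ℚ)+((l m:ℕ):ℚ)-((q i:ℕ):ℚ)-(m:ℚ)+(n:ℚ)+2))
      = ∏ i ∈ Icc 1 n, (((z0:ℕ):ℚ)+(n:ℚ)-((q i:ℕ):ℚ)+2) from
    prod_congr' fun i _ => by rw [hy]; ring]
  rw [show (∏ i ∈ Icc 1 m, ((x:ℚ)+((l m:ℕ):ℚ)+((l i:ℕ):ℚ)-(m:ℚ)+(n:ℚ)+2))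
      = ∏ i ∈ Icc 1 m, (((z0:ℕ):ℚ)+(n:ℚ)+((l i:ℕ):ℚ)+2) from
    prod_congr' fun i _ => by rw [hy]; ring]
  rw [show (∏ i ∈ Icc 1 n, ((x:ℚ)+((l m:ℕ):ℚ)+((q i:ℕ):ℚ)+1))
      = ∏ i ∈ Icc 1 n, (((z0:ℕ):ℚ)+(m:ℚ)+((q i:ℕ):ℚ)+1) from
    prod_congr' fun i _ => by rw [hy]; ring]
  -- polB arguments
  rw [show (x:ℚ)+1+((l m:ℕ):ℚ)-(m:ℚ) = ((z0:ℕ):ℚ)+1 from by rw [hy]; ring,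
    show (x:ℚ)+((l m:ℕ):ℚ)-(m:ℚ) = ((z0:ℕ):ℚ) from by rw [hy]]
  have tl := TL ((z0:ℕ):ℚ) m n l hli
  have tq := TQ ((z0:ℕ):ℚ) m n q hqi
  have core := CORE z0 m n
  have hYl : (0:ℚ) < ∏ i ∈ Icc 1 m, (((z0:ℕ):ℚ)+(n:ℚ)+(i:ℚ)+2) :=
    Finset.prod_pos fun i _ => by positivity
  have hYn : (0:ℚ) < ∏ i ∈ Icc 1 n, (((z0:ℕ):ℚ)+(m:ℚ)+(i:ℚ)+1) :=
    Finset.prod_pos fun i _ => by positivity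
  refine mul_right_cancel₀ (b := (∏ i ∈ Icc 1 m, (((z0:ℕ):ℚ)+(n:ℚ)+(i:ℚ)+2))
      * (∏ i ∈ Icc 1 n, (((z0:ℕ):ℚ)+(m:ℚ)+(i:ℚ)+1))) (by positivity) ?_
  linear_combination
    (constC m n l q * polB m n (((z0:ℕ):ℚ)+1)
      * (∏ i ∈ Icc 1 n, ∏ j ∈ Icc i (q i - 1),
          ((((z0:ℕ):ℚ)+(n:ℚ)-(j:ℚ)+2) * (((z0:ℕ):ℚ)+(m:ℚ)+(j:ℚ)+2)))
      * (Nat.factorial (2*z0+m+n+2) : ℚ) * (Nat.factorial (2*z0+m+n+3) : ℚ)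
      * (∏ i ∈ Icc 1 n, (((z0:ℕ):ℚ)+(n:ℚ)-((q i:ℕ):ℚ)+2))
      * (∏ i ∈ Icc 1 n, (((z0:ℕ):ℚ)+(m:ℚ)+(i:ℚ)+1))) * tl
    + (constC m n l q * polB m n (((z0:ℕ):ℚ)+1)
      * (∏ i ∈ Icc 1 m, ∏ j ∈ Icc i (l i - 1),
          ((((z0:ℕ):ℚ)+(m:ℚ)-(j:ℚ)) * (((z0:ℕ):ℚ)+(n:ℚ)+(j:ℚ)+2)))
      * (∏ i ∈ Icc 1 m, (((z0:ℕ):ℚ)+(m:ℚ)-(i:ℚ)+1))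
      * (∏ i ∈ Icc 1 m, (((z0:ℕ):ℚ)+(n:ℚ)+((l i:ℕ):ℚ)+2))
      * (Nat.factorial (2*z0+m+n+2) : ℚ) * (Nat.factorial (2*z0+m+n+3) : ℚ)) * tq
    + (constC m n l q
      * (∏ i ∈ Icc 1 m, ∏ j ∈ Icc i (l i - 1),
          ((((z0:ℕ):ℚ)+(m:ℚ)-(j:ℚ)) * (((z0:ℕ):ℚ)+(n:ℚ)+(j:ℚ)+2)))
      * (∏ i ∈ Icc 1 m, (((z0:ℕ):ℚ)+(n:ℚ)+((l i:ℕ):ℚ)+2))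
      * (∏ i ∈ Icc 1 n, ∏ j ∈ Icc i (q i - 1),
          ((((z0:ℕ):ℚ)+(n:ℚ)-(j:ℚ)+1) * (((z0:ℕ):ℚ)+(m:ℚ)+(j:ℚ)+1)))
      * (∏ i ∈ Icc 1 n, (((z0:ℕ):ℚ)+(m:ℚ)+((q i:ℕ):ℚ)+1))) * core
end

section
/- For a positive integer r and integers s_1 < ⋯ < s_{2r}, define F_0(r; s_1,…,s_{2r}) := 2^{r^2+2r} / ∏_{i=1}^{r}((i-1)!)^2 · ∏_{1≤i<j≤r}(s_{2j}-s_{2i}) · ∏_{1≤i<j≤r}(s_{2j-1}-s_{2i-1}); for integers s_1 < ⋯ < s_{2r+1}, define F_1(r; s_1,…,s_{2r+1}) := 2^{r^2+3r+1} / (∏_{i=1}^{r}(i-1)! · ∏_{i=1}^{r+1}(i-1)!) · ∏_{1≤i<j≤r}(s_{2j}-s_{2i}) · ∏_{1≤i<j≤r+1}(s_{2j-1}-s_{2i-1}); and for integers s_1 < ⋯ < s_{2r+2}, define F_2(r; s_1,…,s_{2r+2}) := 2^{r^2+4r+3} / (∏_{i=1}^{r}(i-1)! · ∏_{i=1}^{r+2}(i-1)!)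 · [∏_{1≤i<j≤r+1}(s_{2j}-s_{2i})(s_{2j-1}-s_{2i-1})] · (Σ_{i=1}^{2r+2}(-1)^i s_i). Then for every positive integer m and all integers 1 = t_1 < t_2 < ⋯ < t_{2m+2} = N, the following identity holds: F_1(m+1; t_1,…,t_{2m+2},N+1) · F_1(m; t_2-1,…,t_{2m+2}-1) = F_2(m; t_2-1,…,t_{2m+2}-1,N) · F_0(m+1; t_1,…,t_{2m+2}) + F_2(m; t_1,…,t_{2m+2}) · F_0(m+1; t_2-1,…,t_{2m+2}-1,N). -/
/-- `F₀(r; s₁,…,s_{2r})`: the product formula for the number of domino tilings of a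
`2r × N` Aztec rectangle with all unit squares of the central row removed except those
labeled `s₁ < ⋯ < s_{2r}`. -/
def kuoF0 (r : ℕ) (s : ℕ → ℤ) : ℚ :=
  2 ^ (r ^ 2 + 2 * r) / (∏ i ∈ Finset.Icc 1 r, ((Nat.factorial (i - 1) : ℚ)) ^ 2) *
    (∏ i ∈ Finset.Icc 1 r, ∏ j ∈ Finset.Icc (i + 1) r, ((s (2 * j) : ℚ) - s (2 * i))) *
    ∏ i ∈ Finset.Icc 1 r, ∏ j ∈ Finset.Icc (i + 1) r, ((s (2 * j - 1) : ℚ) - s (2 * i - 1))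

/-- `F₁(r; s₁,…,s_{2r+1})`: the product formula for the number of domino tilings of a
`(2r+1) × N` Aztec rectangle with all unit squares of the row just below the central row
removed except those labeled `s₁ < ⋯ < s_{2r+1}`. -/
def kuoF1 (r : ℕ) (s : ℕ → ℤ) : ℚ :=
  2 ^ (r ^ 2 + 3 * r + 1) /
      ((∏ i ∈ Finset.Icc 1 r, (Nat.factorial (i - 1) : ℚ)) *
        ∏ i ∈ Finset.Icc 1 (r + 1), (Nat.factorial (i - 1) : ℚ)) *
    (∏ i ∈ Finset.Icc 1 r, ∏ j ∈ Finset.Icc (i + 1) r, ((s (2 * j) : ℚ) - s (2 * i))) *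
    ∏ i ∈ Finset.Icc 1 (r + 1), ∏ j ∈ Finset.Icc (i + 1) (r + 1),
      ((s (2 * j - 1) : ℚ) - s (2 * i - 1))

/-- `F₂(r; s₁,…,s_{2r+2})`: the product formula for the number of domino tilings of a
`(2r+2) × N` Aztec rectangle with all unit squares of the row two below the central row
removed except those labeled `s₁ < ⋯ < s_{2r+2}`. -/
def kuoF2 (r : ℕ) (s : ℕ → ℤ) : ℚ :=
  2 ^ (r ^ 2 + 4 * r + 3) /
      ((∏ i ∈ Finset.Icc 1 r, (Nat.factorial (i - 1) : ℚ)) *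
        ∏ i ∈ Finset.Icc 1 (r + 2), (Nat.factorial (i - 1) : ℚ)) *
    (∏ i ∈ Finset.Icc 1 (r + 1), ∏ j ∈ Finset.Icc (i + 1) (r + 1),
      (((s (2 * j) : ℚ) - s (2 * i)) * ((s (2 * j - 1) : ℚ) - s (2 * i - 1)))) *
    ∑ i ∈ Finset.Icc 1 (2 * r + 2), (-1 : ℚ) ^ i * s i

private lemma kuo_prod_congr {a b : ℕ} {f g : ℕ → ℚ}
    (h : ∀ i, a ≤ i → i ≤ b → f i = g i) :
    ∏ i ∈ Finset.Icc a b, f i = ∏ i ∈ Finset.Icc a b, g i :=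
  Finset.prod_congr rfl fun i hi => h i (Finset.mem_Icc.mp hi).1 (Finset.mem_Icc.mp hi).2

private lemma kuo_prod_congr2 {b : ℕ} {f g : ℕ → ℕ → ℚ}
    (h : ∀ i j, 1 ≤ i → i ≤ b → i + 1 ≤ j → j ≤ b → f i j = g i j) :
    (∏ i ∈ Finset.Icc 1 b, ∏ j ∈ Finset.Icc (i + 1) b, f i j)
      = ∏ i ∈ Finset.Icc 1 b, ∏ j ∈ Finset.Icc (i + 1) b, g i j :=
  Finset.prod_congr rfl fun i hi => Finset.prod_congr rfl fun j hj =>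
    h i j (Finset.mem_Icc.mp hi).1 (Finset.mem_Icc.mp hi).2
      (Finset.mem_Icc.mp hj).1 (Finset.mem_Icc.mp hj).2

private lemma kuo_sum_congr {a b : ℕ} {f g : ℕ → ℚ}
    (h : ∀ i, a ≤ i → i ≤ b → f i = g i) :
    ∑ i ∈ Finset.Icc a b, f i = ∑ i ∈ Finset.Icc a b, g i :=
  Finset.sum_congr rfl fun i hi => h i (Finset.mem_Icc.mp hi).1 (Finset.mem_Icc.mp hi).2

private lemma kuo_prod_Icc_to_range (f : ℕ → ℚ) (n : ℕ) :
    ∏ i ∈ Finset.Icc 1 n, f i = ∏ i ∈ Finset.range n, f (1 + i) := by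
  rw [← Finset.Ico_add_one_right_eq_Icc, Finset.prod_Ico_eq_prod_range]
  simp

private lemma kuo_sum_Icc_to_range (f : ℕ → ℚ) (n : ℕ) :
    ∑ i ∈ Finset.Icc 1 n, f i = ∑ i ∈ Finset.range n, f (1 + i) := by
  rw [← Finset.Ico_add_one_right_eq_Icc, Finset.sum_Ico_eq_sum_range]
  simp

private lemma kuo_alt (x : ℕ → ℤ) (n : ℕ) :
    (∑ i ∈ Finset.range (2*n+1), (-1:ℚ)^(1+i) * ((x (1+i+1) : ℚ) - 1)) +
      ∑ i ∈ Finset.range (2*n+2), (-1:ℚ)^(1+i) * (x (1+i) : ℚ) = 1 - (x 1 : ℚ) := by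
  induction n with
  | zero =>
    norm_num [Finset.sum_range_succ]
    ring
  | succ k ih =>
    have h1 : 2*(k+1)+1 = (2*k+1) + 1 + 1 := by ring
    have h2 : 2*(k+1)+2 = (2*k+2) + 1 + 1 := by ring
    rw [h1, h2,
      Finset.sum_range_succ (fun i => (-1:ℚ)^(1+i) * ((x (1+i+1) : ℚ) - 1)) ((2*k+1)+1),
      Finset.sum_range_succ (fun i => (-1:ℚ)^(1+i) * ((x (1+i+1) : ℚ) - 1)) (2*k+1),
      Finset.sum_range_succ (fun i => (-1:ℚ)^(1+i) * (x (1+i) : ℚ)) ((2*k+2)+1),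
      Finset.sum_range_succ (fun i => (-1:ℚ)^(1+i) * (x (1+i) : ℚ)) (2*k+2)]
    have e1 : ((-1:ℚ))^(1+(2*k+1)) = 1 := Even.neg_one_pow ⟨k+1, by ring⟩
    have e2 : ((-1:ℚ))^(1+(2*k+1+1)) = -1 := Odd.neg_one_pow ⟨k+1, by ring⟩
    have e4 : ((-1:ℚ))^(1+(2*k+2+1)) = 1 := Even.neg_one_pow ⟨k+2, by ring⟩
    have i1 : x (1+(2*k+1)+1) = x (1+(2*k+2)) := by congr 1
    have i2 : x (1+(2*k+1+1)+1) = x (1+(2*k+2+1)) := by congr 1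
    rw [e1, e2, e4, i1, i2]
    linarith [ih]

/-- The Kuo graphical-condensation recurrence satisfied by the product formulas
`F₀`, `F₁`, `F₂`, for all `1 = t₁ < t₂ < ⋯ < t_{2m+2} = N`:
`F₁(m+1; t₁,…,t_{2m+2},N+1)·F₁(m; t₂-1,…,t_{2m+2}-1)
  = F₂(m; t₂-1,…,t_{2m+2}-1,N)·F₀(m+1; t₁,…,t_{2m+2})
    + F₂(m; t₁,…,t_{2m+2})·F₀(m+1; t₂-1,…,t_{2m+2}-1,N)`. -/
theorem kuo_condensation_identity (m : ℕ) (hm : 1 ≤ m) (N : ℤ) (t : ℕ → ℤ)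
    (hmono : ∀ i j, 1 ≤ i → i < j → j ≤ 2 * m + 2 → t i < t j)
    (h1 : t 1 = 1) (hN : t (2 * m + 2) = N) :
    kuoF1 (m + 1) (fun i => if i = 2 * m + 3 then N + 1 else t i) *
        kuoF1 m (fun i => t (i + 1) - 1) =
      kuoF2 m (fun i => if i = 2 * m + 2 then N else t (i + 1) - 1) *
          kuoF0 (m + 1) t +
        kuoF2 m t *
          kuoF0 (m + 1) (fun i => if i = 2 * m + 2 then N else t (i + 1) - 1) := by
  clear hmono hm hN
  set s1 : ℕ → ℤ := fun i => if i = 2 * m + 3 then N + 1 else t i with hs1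
  set u : ℕ → ℤ := fun i => t (i + 1) - 1 with hu
  set v : ℕ → ℤ := fun i => if i = 2 * m + 2 then N else t (i + 1) - 1 with hv
  set E : ℚ := ∏ i ∈ Finset.Icc 1 (m+1), ∏ j ∈ Finset.Icc (i+1) (m+1),
    ((t (2*j) : ℚ) - t (2*i)) with hE
  set O : ℚ := ∏ i ∈ Finset.Icc 1 (m+1), ∏ j ∈ Finset.Icc (i+1) (m+1),
    ((t (2*j-1) : ℚ) - t (2*i-1)) with hO
  set O' : ℚ := ∏ i ∈ Finset.Icc 1 m, ∏ j ∈ Finset.Icc (i+1) m,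
    ((t (2*j+1) : ℚ) - t (2*i+1)) with hO'
  set P' : ℚ := ∏ i ∈ Finset.range m, ((N : ℚ) + 1 - (t (2*i+3) : ℚ)) with hP'
  set A : ℚ := ∑ i ∈ Finset.Icc 1 (2*m+2), (-1:ℚ)^i * (t i : ℚ) with hA
  set D0 : ℚ := ∏ i ∈ Finset.Icc 1 m, (Nat.factorial (i-1) : ℚ) with hD0
  set D1 : ℚ := ∏ i ∈ Finset.Icc 1 (m+1), (Nat.factorial (i-1) : ℚ) with hD1
  set D2 : ℚ := ∏ i ∈ Finset.Icc 1 (m+2), (Nat.factorial (i-1) : ℚ) with hD2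
  -- t 1 = 1 over ℚ
  have h1' : (t 1 : ℚ) = 1 := by exact_mod_cast h1
  -- the `P`-type product
  have hPfold : ∏ i ∈ Finset.Icc 1 (m+1), ((N:ℚ) + 1 - (t (2*i-1) : ℚ)) = (N:ℚ) * P' := by
    rw [kuo_prod_Icc_to_range]
    rw [Finset.prod_range_succ']
    have hz : (2*(1+0)-1 : ℕ) = 1 := by norm_num
    rw [hz, h1']
    have hcg : ∀ i ∈ Finset.range m,
        ((N:ℚ) + 1 - (t (2*(1+(i+1))-1) : ℚ)) = ((N:ℚ) + 1 - (t (2*i+3) : ℚ)) := by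
      intro i _
      have : 2*(1+(i+1))-1 = 2*i+3 := by omega
      rw [this]
    rw [Finset.prod_congr rfl hcg, ← hP']
    ring
  -- components for `kuoF1 (m+1) s1`
  have c1 : (∏ i ∈ Finset.Icc 1 (m+1), ∏ j ∈ Finset.Icc (i+1) (m+1),
      ((s1 (2*j) : ℚ) - s1 (2*i))) = E := by
    rw [hE]
    exact kuo_prod_congr2 fun i j hi1 hi2 hj1 hj2 => by
      simp only [hs1]
      rw [if_neg (by omega), if_neg (by omega)]
  have c2 : (∏ i ∈ Finset.Icc 1 (m+2), ∏ j ∈ Finset.Icc (i+1) (m+2),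
      ((s1 (2*j-1) : ℚ) - s1 (2*i-1))) = O * ((N:ℚ) * P') := by
    rw [Finset.prod_Icc_succ_top (by omega : (1:ℕ) ≤ (m+1)+1)]
    rw [Finset.Icc_eq_empty (by omega : ¬((m+1)+1+1 ≤ (m+1)+1)), Finset.prod_empty, mul_one]
    have hsplit : ∀ i ∈ Finset.Icc 1 (m+1),
        (∏ j ∈ Finset.Icc (i+1) ((m+1)+1), ((s1 (2*j-1) : ℚ) - s1 (2*i-1)))
          = (∏ j ∈ Finset.Icc (i+1) (m+1), ((s1 (2*j-1) : ℚ) - s1 (2*i-1)))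
            * ((s1 (2*((m+1)+1)-1) : ℚ) - s1 (2*i-1)) := by
      intro i hi
      exact Finset.prod_Icc_succ_top (by have := (Finset.mem_Icc.mp hi).2; omega) _
    rw [Finset.prod_congr rfl hsplit, Finset.prod_mul_distrib]
    congr 1
    · rw [hO]
      exact kuo_prod_congr2 fun i j hi1 hi2 hj1 hj2 => by
        simp only [hs1]
        rw [if_neg (by omega), if_neg (by omega)]
    · rw [← hPfold]
      exact kuo_prod_congr fun i hi1 hi2 => by
        simp only [hs1]
        rw [if_pos (by omega), if_neg (by omega)]
        push_cast
        ring
  -- components for `kuoF1 m u`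
  have c3 : (∏ i ∈ Finset.Icc 1 m, ∏ j ∈ Finset.Icc (i+1) m,
      ((u (2*j) : ℚ) - u (2*i))) = O' := by
    rw [hO']
    exact kuo_prod_congr2 fun i j hi1 hi2 hj1 hj2 => by
      simp only [hu]
      push_cast
      ring
  have c4 : (∏ i ∈ Finset.Icc 1 (m+1), ∏ j ∈ Finset.Icc (i+1) (m+1),
      ((u (2*j-1) : ℚ) - u (2*i-1))) = E := by
    rw [hE]
    exact kuo_prod_congr2 fun i j hi1 hi2 hj1 hj2 => by
      simp only [hu]
      rw [show 2*j-1+1 = 2*j from by omega, show 2*i-1+1 = 2*i from by omega]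
      push_cast
      ring
  -- components for `v`
  have c5 : (∏ i ∈ Finset.Icc 1 (m+1), ∏ j ∈ Finset.Icc (i+1) (m+1),
      ((v (2*j) : ℚ) - v (2*i))) = O' * P' := by
    rw [Finset.prod_Icc_succ_top (by omega : (1:ℕ) ≤ m+1)]
    rw [Finset.Icc_eq_empty (by omega : ¬(m+1+1 ≤ m+1)), Finset.prod_empty, mul_one]
    have hsplit : ∀ i ∈ Finset.Icc 1 m,
        (∏ j ∈ Finset.Icc (i+1) (m+1), ((v (2*j) : ℚ) - v (2*i)))
          = (∏ j ∈ Finset.Icc (i+1) m, ((v (2*j) : ℚ) - v (2*i)))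
            * ((v (2*(m+1)) : ℚ) - v (2*i)) := by
      intro i hi
      exact Finset.prod_Icc_succ_top (by have := (Finset.mem_Icc.mp hi).2; omega) _
    rw [Finset.prod_congr rfl hsplit, Finset.prod_mul_distrib]
    congr 1
    · rw [hO']
      exact kuo_prod_congr2 fun i j hi1 hi2 hj1 hj2 => by
        simp only [hv]
        rw [if_neg (by omega), if_neg (by omega)]
        push_cast
        ring
    · have hcg : ∀ i, 1 ≤ i → i ≤ m →
          ((v (2*(m+1)) : ℚ) - v (2*i)) = ((N:ℚ) + 1 - (t (2*i+1) : ℚ)) := by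
        intro i hi1 hi2
        simp only [hv]
        rw [if_pos (by omega), if_neg (by omega)]
        push_cast
        ring
      rw [kuo_prod_congr hcg, kuo_prod_Icc_to_range, hP']
      exact Finset.prod_congr rfl fun i _ => by
        rw [show 2*(1+i)+1 = 2*i+3 from by omega]
  have c6 : (∏ i ∈ Finset.Icc 1 (m+1), ∏ j ∈ Finset.Icc (i+1) (m+1),
      ((v (2*j-1) : ℚ) - v (2*i-1))) = E := by
    rw [hE]
    exact kuo_prod_congr2 fun i j hi1 hi2 hj1 hj2 => by
      simp only [hv]
      rw [if_neg (by omega), if_neg (by omega),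
        show 2*j-1+1 = 2*j from by omega, show 2*i-1+1 = 2*i from by omega]
      push_cast
      ring
  have c7 : (∑ i ∈ Finset.Icc 1 (2*m+2), (-1:ℚ)^i * (v i : ℚ)) = (N:ℚ) - A := by
    rw [Finset.sum_Icc_succ_top (by omega : (1:ℕ) ≤ (2*m+1)+1)]
    have hvtop : (v ((2*m+1)+1) : ℚ) = (N:ℚ) := by
      simp only [hv]
      simp
    have hetop : ((-1:ℚ))^((2*m+1)+1) = 1 := Even.neg_one_pow ⟨m+1, by ring⟩
    rw [hvtop, hetop]
    have hcg : ∀ i, 1 ≤ i → i ≤ 2*m+1 →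
        ((-1:ℚ)^i * (v i : ℚ)) = (-1:ℚ)^i * ((t (i+1) : ℚ) - 1) := by
      intro i hi1 hi2
      simp only [hv]
      rw [if_neg (by omega)]
      push_cast
      ring
    rw [kuo_sum_congr hcg, kuo_sum_Icc_to_range, hA, kuo_sum_Icc_to_range]
    have halt := kuo_alt t m
    rw [h1'] at halt
    linarith [halt]
  -- evaluations of the six kuoF values
  have hF1s : kuoF1 (m+1) s1 = 2^((m+1)^2+3*(m+1)+1) / (D1 * D2) * E * (O * ((N:ℚ) * P')) := by
    unfold kuoF1
    rw [show m+1+1 = m+2 from rfl] at *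
    rw [c1, c2, ← hD1, ← hD2]
  have hF1u : kuoF1 m u = 2^(m^2+3*m+1) / (D0 * D1) * O' * E := by
    unfold kuoF1
    rw [c3, c4, ← hD0, ← hD1]
  have hF2v : kuoF2 m v = 2^(m^2+4*m+3) / (D0 * D2) * ((O' * P') * E) * ((N:ℚ) - A) := by
    unfold kuoF2
    simp only [Finset.prod_mul_distrib]
    rw [c5, c6, c7, ← hD0, ← hD2]
  have hF2t : kuoF2 m t = 2^(m^2+4*m+3) / (D0 * D2) * (E * O) * A := by
    unfold kuoF2
    simp only [Finset.prod_mul_distrib]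
    rw [← hD0, ← hD2, ← hE, ← hO, ← hA]
  have hDsq : (∏ i ∈ Finset.Icc 1 (m+1), ((Nat.factorial (i-1) : ℚ))^2) = D1^2 := by
    rw [hD1, Finset.prod_pow]
  have hF0t : kuoF0 (m+1) t = 2^((m+1)^2+2*(m+1)) / D1^2 * E * O := by
    unfold kuoF0
    rw [hDsq, ← hE, ← hO]
  have hF0v : kuoF0 (m+1) v = 2^((m+1)^2+2*(m+1)) / D1^2 * (O' * P') * E := by
    unfold kuoF0
    rw [hDsq, c5, c6]
  rw [hF1s, hF1u, hF2v, hF2t, hF0t, hF0v]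
  have hpow : (2:ℚ)^((m+1)^2+3*(m+1)+1) * 2^(m^2+3*m+1)
      = 2^(m^2+4*m+3) * 2^((m+1)^2+2*(m+1)) := by
    rw [← pow_add, ← pow_add]
    congr 1
    ring
  field_simp
  linear_combination (E * E * O * O' * P' * D0 * D1 * D2 * (N:ℚ) -
    E * E * O * O' * P' * D0 * D1 * D2 * A) * hpow + (E * E * O * O' * P' * D0 * D1 * D2 * A) * hpow
end
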